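/- arXiv:2307.07661 — 5 statements merged into one kernel-verified Lean document; each statement's English description precedes it below -/
import Mathlib

section
/- If X is a cubical complex admitting a diagram system (D, ε), then for every n ≥ 0 the abelian group U_n(X) is generated by the elements ε_0(a) where a ranges over (isomorphism classes of) objects of D of order at most n. -/
open CategoryTheory Opposite

/-- The combinatorial `n`-cube: functions `[n] → {0,1}`. -/
abbrev Cube (n : ℕ) := Fin n → Bool

/-- A function between combinatorial cubes is a cube map if it admits a pair `(f, s)` where
`f : [m] → [n]` is injective, `s` assigns a fixed bit to every coordinate outside the image
of `f`, every coordinate of the input is copied to its `f`-image coordinate, and every point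
of the image agrees with `s` outside the image of `f`. -/
def IsCubeMap {m n : ℕ} (a : Cube m → Cube n) : Prop :=
  ∃ (f : Fin m → Fin n) (s : Fin n → Bool),
    Function.Injective f ∧
    (∀ (b : Cube m) (i : Fin m), b i = a b (f i)) ∧
    (∀ b ∈ Set.range a, ∀ i : Fin n, (∀ j, f j ≠ i) → b i = s i)

theorem isCubeMap_id (m : ℕ) : IsCubeMap (id : Cube m → Cube m) := by
  refine ⟨id, fun _ => false, fun _ _ h => h, fun _ _ => rfl, ?_⟩
  intro b _ i hi
  exact absurd rfl (hi i)

theorem IsCubeMap.comp {m n k : ℕ} {a : Cube m → Cube n} {b : Cube n → Cube k}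
    (ha : IsCubeMap a) (hb : IsCubeMap b) : IsCubeMap (b ∘ a) := by
  classical
  obtain ⟨f₁, s₁, hf₁inj, hf₁, hs₁⟩ := ha
  obtain ⟨f₂, s₂, hf₂inj, hf₂, hs₂⟩ := hb
  refine ⟨f₂ ∘ f₁, fun i => if h : ∃ j, f₂ j = i then s₁ h.choose else s₂ i,
    hf₂inj.comp hf₁inj, ?_, ?_⟩
  · intro c i
    calc c i = a c (f₁ i) := hf₁ c i
    _ = b (a c) (f₂ (f₁ i)) := hf₂ (a c) (f₁ i)
  · rintro d ⟨c, rfl⟩ i hi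
    dsimp only
    by_cases h : ∃ j, f₂ j = i
    · rw [dif_pos h]
      have h1 : a c h.choose = (b ∘ a) c (f₂ h.choose) := hf₂ (a c) h.choose
      rw [h.choose_spec] at h1
      rw [← h1]
      refine hs₁ _ ⟨c, rfl⟩ _ ?_
      intro j hj
      exact hi j (by rw [Function.comp_apply, hj, h.choose_spec])
    · rw [dif_neg h]
      exact hs₂ _ ⟨a c, rfl⟩ i (fun j hj => h ⟨j, hj⟩)

/-- The hom set of the cube category. -/
def CubeHom (m n : ℕ) := {a : Cube m → Cube n // IsCubeMap a}

/-- Objects of the cube category `Cb` are the combinatorial `n`-cubes. -/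
structure CubeCat where
  n : ℕ

/-- The object of `Cb` corresponding to the combinatorial `n`-cube. -/
def cubeObj (n : ℕ) : CubeCat := ⟨n⟩

instance : Category CubeCat where
  Hom A B := CubeHom A.n B.n
  id A := ⟨_root_.id, isCubeMap_id A.n⟩
  comp f g := ⟨g.1 ∘ f.1, f.2.comp g.2⟩

noncomputable instance (A B : CubeCat) : Fintype (A ⟶ B) := by
  classical
  exact Subtype.fintype _

/-- A cubical complex is a contravariant functor from the cube category to `Set`. -/
abbrev CubicalComplex := CubeCatᵒᵖ ⥤ Type

/-- `|f(∅)|`: the number of `1`s in the image corner of a map from the `0`-cube. -/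
def cubeWeight {n : ℕ} (f : cubeObj 0 ⟶ cubeObj (n + 1)) : ℕ :=
  (@Finset.filter _ (fun i : Fin (n + 1) => f.1 (fun j : Fin 0 => j.elim0) i = true)
    (fun _ => instDecidableEqBool _ _) Finset.univ).card

/-- The alternating sum over the corners of an `(n+1)`-cell, i.e. the relation
`∑_{f ∈ Hom(C₀, C_{n+1})} (-1)^{|f(∅)|} · X(fᵒᵖ)(c)`. -/
noncomputable def relationElt (X : CubicalComplex) (n : ℕ)
    (c : X.obj (op (cubeObj (n + 1)))) :
    FreeAbelianGroup (X.obj (op (cubeObj 0))) :=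
  ∑ f : cubeObj 0 ⟶ cubeObj (n + 1),
    ((-1 : ℤ) ^ cubeWeight f) • FreeAbelianGroup.of (X.map f.op c)

/-- The subgroup of relations of the rank `n` finite type group. -/
noncomputable def relSubgroup (X : CubicalComplex) (n : ℕ) :
    AddSubgroup (FreeAbelianGroup (X.obj (op (cubeObj 0)))) :=
  AddSubgroup.closure (Set.range (relationElt X n))

/-- The rank `n` finite type group `Uₙ(X)` of a cubical complex `X`: generated by the
`0`-cells, subject to the alternating-corner-sum relations of the `(n+1)`-cells. -/
noncomputable def UGroup (X : CubicalComplex) (n : ℕ) : Type :=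
  FreeAbelianGroup (X.obj (op (cubeObj 0))) ⧸ relSubgroup X n

noncomputable instance (X : CubicalComplex) (n : ℕ) : AddCommGroup (UGroup X n) := by
  unfold UGroup; infer_instance

/-- The generator of `Uₙ(X)` corresponding to a `0`-cell. -/
noncomputable def mkU (X : CubicalComplex) (n : ℕ) (x : X.obj (op (cubeObj 0))) : UGroup X n :=
  QuotientAddGroup.mk (FreeAbelianGroup.of x)
/-- A diagram category structure on a category `C` equipped with a functor `F` to the category
of finite types: `F` is faithful, takes values in injective maps (so it is a functor to `Inj`),
every subset of `F a` is realized as the image of some arrow into `a` (subdiagrams exist), and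
any two arrows into `a` with the same image differ by an isomorphism. -/
structure IsDiagramCat (C : Type) [SmallCategory C] (F : C ⥤ FintypeCat) : Prop where
  faithful : ∀ {a b : C} (f g : a ⟶ b), F.map f = F.map g → f = g
  inj : ∀ {a b : C} (f : a ⟶ b), Function.Injective (F.map f)
  sub : ∀ (a : C) (S : Set (F.obj a)), ∃ (b : C) (f : b ⟶ a), Set.range (F.map f) = S
  unique_sub : ∀ {a b₁ b₂ : C} (f₁ : b₁ ⟶ a) (f₂ : b₂ ⟶ a),
    Set.range (F.map f₁) = Set.range (F.map f₂) → ∃ g : b₁ ≅ b₂, f₁ = g.hom ≫ f₂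

/-- A representative of an `n`-cell of the cubical complex `D^□` of a diagram category:
a pair `(g : p → q, φ)` where `φ` is a bijective labelling of `F q ∖ im (F g)` by `[n]`.
Such a pair is faithfully encoded (up to the isomorphism relation below) by the object `q`
together with the injection `lab = φ⁻¹ : [n] → F q`; the domain `p` of `g` is the subdiagram
of `q` on the complement of the range of `lab`. -/
structure PreCell (C : Type) [SmallCategory C] (F : C ⥤ FintypeCat) (n : ℕ) where
  q : C
  lab : Fin n → F.obj q
  inj : Function.Injective lab

/-- Isomorphism of pairs: an isomorphism of the underlying objects commuting with the
labellings (the component on the domains `p` exists automatically). -/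
def CellRel (C : Type) [SmallCategory C] (F : C ⥤ FintypeCat) (n : ℕ)
    (c₁ c₂ : PreCell C F n) : Prop :=
  ∃ h : c₁.q ≅ c₂.q, ∀ i, F.map h.hom (c₁.lab i) = c₂.lab i

/-- The set of `n`-cells of `D^□`: isomorphism classes of pairs `(g, φ)`. -/
def DCell (C : Type) [SmallCategory C] (F : C ⥤ FintypeCat) (n : ℕ) :=
  Quot (CellRel C F n)

/-- The `0`-cells of `D^□` are identified with isomorphism classes of objects of `D`. -/
def objCell (C : Type) [SmallCategory C] (F : C ⥤ FintypeCat) (a : C) : DCell C F 0 :=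
  Quot.mk _ ⟨a, fun i => i.elim0, fun i => i.elim0⟩

/-- Given an `n`-cell with label injection `lab` and a cube map witness `(f, s)`, the subset of
`F q` kept after deleting the labelled elements whose label lies outside the image of `f`
and has `s`-value `0`; this is `F(q) ∖ φ⁻¹s⁻¹{0}`. -/
def KeepSet {C : Type} [SmallCategory C] {F : C ⥤ FintypeCat} {m n : ℕ}
    (c : PreCell C F n) (f : Fin m → Fin n) (s : Fin n → Bool) : Set (F.obj c.q) :=
  (c.lab '' {ℓ : Fin n | (∀ j, f j ≠ ℓ) ∧ s ℓ = false})ᶜ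

/-- A realization of the cubical complex `D^□` of a diagram category: a cubical complex whose
`n`-cells are the isomorphism classes of pairs `(g, φ)` and whose action along a cube map
`a : C_m → C_n` with associated pair `(f, s)` is given by the formula
`D^□(aᵒᵖ)(g, φ) = (ι_{(im F(g) ∪ φ⁻¹s⁻¹{1}, F(q) ∖ φ⁻¹s⁻¹{0})}, f⁻¹ ∘ φ|_{φ⁻¹(im f)} ∘ F(ι_{F(q) ∖ φ⁻¹s⁻¹{0}}))`:
in terms of the label injections, the new cell is carried by the subdiagram `q'` of `q` on
`F(q) ∖ φ⁻¹s⁻¹{0}` (with inclusion `ι`), with `F(ι)(lab' i) = lab (f i)` for all `i`. -/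
structure BoxComplex (C : Type) [SmallCategory C] (F : C ⥤ FintypeCat) where
  X : CubicalComplex
  cells : ∀ n : ℕ, X.obj (op (cubeObj n)) ≃ DCell C F n
  map_spec : ∀ {m n : ℕ} (a : cubeObj m ⟶ cubeObj n) (f : Fin m → Fin n) (s : Fin n → Bool),
    Function.Injective f →
    (∀ (b : Cube m) (i : Fin m), b i = a.1 b (f i)) →
    (∀ b ∈ Set.range a.1, ∀ i : Fin n, (∀ j, f j ≠ i) → b i = s i) →
    ∀ (c : PreCell C F n) (c' : PreCell C F m) (ι : c'.q ⟶ c.q),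
      Set.range (F.map ι) = KeepSet c f s →
      (∀ i, F.map ι (c'.lab i) = c.lab (f i)) →
      cells m (X.map a.op ((cells n).symm (Quot.mk _ c))) = Quot.mk _ c'
/-- The corner `C₀ → C_{n+1}` at the all-`true` point. -/
def allTrueHom (n : ℕ) : cubeObj 0 ⟶ cubeObj (n + 1) :=
  ⟨fun _ _ => true, fun j => j.elim0, fun _ => true, fun a _ _ => a.elim0,
    fun _ i => i.elim0, fun b hb i _ => by obtain ⟨x, rfl⟩ := hb; rfl⟩

lemma cubeWeight_allTrueHom (n : ℕ) : cubeWeight (allTrueHom n) = n + 1 := by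
  simp [cubeWeight, allTrueHom]

lemma eq_allTrueHom {n : ℕ} (f : cubeObj 0 ⟶ cubeObj (n + 1))
    (h : ∀ i, f.1 (fun j : Fin 0 => j.elim0) i = true) : f = allTrueHom n := by
  apply Subtype.ext
  funext b i
  have hb : b = (fun j : Fin 0 => j.elim0) := funext fun j => j.elim0
  rw [hb]
  exact h i

lemma preCell0_eq {C : Type} [SmallCategory C] {F : C ⥤ FintypeCat} (c : PreCell C F 0) :
    Quot.mk (CellRel C F 0) c = objCell C F c.q :=
  Quot.sound ⟨Iso.refl c.q, fun i => i.elim0⟩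

attribute [local instance] FintypeCat.fintype

/-- A diagram system for a cubical complex `X`: a diagram category `(C, F)` together with a
realization `B` of its cubical complex `D^□` and a natural transformation `ε : D^□ ⟶ X`
whose `0`-component is surjective.  **Statement 2.** If `X` admits a diagram system, then for
every `n ≥ 0` the group `Uₙ(X)` is generated by the elements `ε₀(a)` where `a` ranges over
(isomorphism classes of) objects of the diagram category of order `|a| = |F(a)| ≤ n`. -/

theorem UGroup_generated_by_small_diagrams (C : Type) [SmallCategory C] (F : C ⥤ FintypeCat)
    (hF : IsDiagramCat C F) (B : BoxComplex C F) (X : CubicalComplex) (ε : B.X ⟶ X)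
    (hsurj : Function.Surjective (ε.app (op (cubeObj 0)))) (n : ℕ) :
    AddSubgroup.closure
      {u : UGroup X n | ∃ a : C, Nat.card (F.obj a) ≤ n ∧
        u = mkU X n (ε.app (op (cubeObj 0)) ((B.cells 0).symm (objCell C F a)))} = ⊤ := by
  classical
  set S : Set (UGroup X n) := {u | ∃ a : C, Nat.card (F.obj a) ≤ n ∧
      u = mkU X n (ε.app (op (cubeObj 0)) ((B.cells 0).symm (objCell C F a)))} with hSdef
  have key : ∀ (k : ℕ) (q : C), Fintype.card (F.obj q) ≤ k →
      mkU X n (ε.app (op (cubeObj 0)) ((B.cells 0).symm (objCell C F q))) ∈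
        AddSubgroup.closure S := by
    intro k
    induction k with
    | zero =>
      intro q hq
      exact AddSubgroup.subset_closure ⟨q, by rw [Nat.card_eq_fintype_card]; omega, rfl⟩
    | succ k IH =>
      intro q hq
      by_cases hcard : Fintype.card (F.obj q) ≤ n
      · exact AddSubgroup.subset_closure ⟨q, by rw [Nat.card_eq_fintype_card]; exact hcard, rfl⟩
      · push_neg at hcard
        set G := mkU X n (ε.app (op (cubeObj 0)) ((B.cells 0).symm (objCell C F q))) with hGdef
        set pt : Cube 0 := (fun j : Fin 0 => j.elim0) with hptdef
        have hpt : ∀ b : Cube 0, b = pt := fun b => funext fun j => j.elim0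
        let e := Fintype.equivFin (F.obj q)
        set lab : Fin (n + 1) → F.obj q := fun i => e.symm (Fin.castLE hcard i) with hlabdef
        have hlab : Function.Injective lab :=
          e.symm.injective.comp (Fin.castLE_injective hcard)
        set c : PreCell C F (n + 1) := ⟨q, lab, hlab⟩ with hcdef
        set cB := (B.cells (n + 1)).symm (Quot.mk _ c) with hcBdef
        set cX := ε.app (op (cubeObj (n + 1))) cB with hcXdef
        have hcorner : ∀ f : cubeObj 0 ⟶ cubeObj (n + 1), ∃ (b : C) (ι : b ⟶ q),
            Set.range (F.map ι) = KeepSet c (fun j : Fin 0 => j.elim0) (f.1 pt) ∧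
            X.map f.op cX = ε.app (op (cubeObj 0)) ((B.cells 0).symm (objCell C F b)) := by
          intro f
          obtain ⟨b, ι, hrng⟩ := hF.sub q (KeepSet c (fun j : Fin 0 => j.elim0) (f.1 pt))
          refine ⟨b, ι, hrng, ?_⟩
          have hspec := B.map_spec f (fun j : Fin 0 => j.elim0) (f.1 pt)
            (fun a _ _ => a.elim0) (fun _ i => i.elim0)
            (by rintro b' ⟨b₀, rfl⟩ i _; rw [hpt b₀])
            c ⟨b, fun i => i.elim0, fun i => i.elim0⟩ ι hrng (fun i => i.elim0)
          have h1 : B.X.map f.op cB = (B.cells 0).symm (objCell C F b) :=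
            (Equiv.eq_symm_apply _).mpr hspec
          have h2 : ε.app (op (cubeObj 0)) (B.X.map f.op cB) = X.map f.op (ε.app _ cB) :=
            FunctorToTypes.naturality (F := B.X) (G := X) (φ := ε) (f := f.op) (x := cB)
          rw [hcXdef, ← h2, h1]
        have hrel : ∑ f : cubeObj 0 ⟶ cubeObj (n + 1),
            ((-1 : ℤ) ^ cubeWeight f) • mkU X n (X.map f.op cX) = 0 := by
          have h0 : (QuotientAddGroup.mk' (relSubgroup X n)) (relationElt X n cX) = 0 := by
            rw [QuotientAddGroup.mk'_apply]
            exact (QuotientAddGroup.eq_zero_iff _).mpr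
              (AddSubgroup.subset_closure ⟨cX, rfl⟩)
          rw [relationElt, map_sum] at h0
          simp only [map_zsmul] at h0
          exact h0
        obtain ⟨b₀c, ι₀, hrng₀, heq₀⟩ := hcorner (allTrueHom n)
        have hb₀ : objCell C F b₀c = objCell C F q := by
          have huniv : KeepSet c (fun j : Fin 0 => j.elim0) ((allTrueHom n).1 pt) =
              Set.univ := by
            rw [Set.eq_univ_iff_forall]
            intro x hx
            obtain ⟨ℓ, ⟨-, hfalse⟩, -⟩ := hx
            simp [allTrueHom] at hfalse
          have hid : Set.range (F.map ι₀) = Set.range (F.map (𝟙 q)) := by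
            rw [hrng₀, huniv, F.map_id]
            exact (Set.range_eq_univ.mpr fun x => ⟨x, rfl⟩).symm
          obtain ⟨g, -⟩ := hF.unique_sub ι₀ (𝟙 q) hid
          exact Quot.sound ⟨g, fun i => i.elim0⟩
        have hterm : ∀ f ∈ Finset.univ.erase (allTrueHom n),
            ((-1 : ℤ) ^ cubeWeight f) • mkU X n (X.map f.op cX) ∈
              AddSubgroup.closure S := by
          intro f hf
          obtain ⟨b, ι, hrng, heq⟩ := hcorner f
          have hℓ : ∃ ℓ, f.1 pt ℓ = false := by
            by_contra h
            push_neg at h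
            refine Finset.ne_of_mem_erase hf (eq_allTrueHom f fun i => ?_)
            cases hbi : f.1 pt i with
            | false => exact absurd hbi (h i)
            | true => rfl
          obtain ⟨ℓ, hℓ⟩ := hℓ
          have hnotmem : lab ℓ ∉ Set.range (F.map ι) := by
            rw [hrng]
            intro hmem
            exact hmem ⟨ℓ, ⟨fun j => j.elim0, hℓ⟩, rfl⟩
          have hlt : Fintype.card (F.obj b) < Fintype.card (F.obj q) :=
            Fintype.card_lt_of_injective_of_notMem (F.map ι) (hF.inj ι) hnotmem
          rw [heq]
          exact AddSubgroup.zsmul_mem _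
            (IH b (Nat.lt_succ_iff.mp (lt_of_lt_of_le hlt hq))) _
        have hsum : (∑ f ∈ Finset.univ.erase (allTrueHom n),
            ((-1 : ℤ) ^ cubeWeight f) • mkU X n (X.map f.op cX)) ∈
              AddSubgroup.closure S :=
          AddSubgroup.sum_mem _ hterm
        rw [← Finset.add_sum_erase _ _ (Finset.mem_univ (allTrueHom n)),
          cubeWeight_allTrueHom, heq₀, hb₀] at hrel
        have hG1 : ((-1 : ℤ) ^ (n + 1)) • G = -(∑ f ∈ Finset.univ.erase (allTrueHom n),
            ((-1 : ℤ) ^ cubeWeight f) • mkU X n (X.map f.op cX)) :=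
          eq_neg_of_add_eq_zero_left hrel
        have hG2 : G = ((-1 : ℤ) ^ (n + 1)) • (((-1 : ℤ) ^ (n + 1)) • G) := by
          rw [smul_smul, ← pow_add, Even.neg_one_pow ⟨n + 1, rfl⟩, one_smul]
        rw [hG2, hG1]
        exact AddSubgroup.zsmul_mem _ (AddSubgroup.neg_mem _ hsum) _
  have hcell : ∀ d : DCell C F 0,
      mkU X n (ε.app (op (cubeObj 0)) ((B.cells 0).symm d)) ∈ AddSubgroup.closure S := by
    intro d
    induction d using Quot.ind with
    | _ c =>
    rw [preCell0_eq c]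
    exact key (Fintype.card (F.obj c.q)) c.q le_rfl
  have hmem : ∀ z : FreeAbelianGroup (X.obj (op (cubeObj 0))),
      (QuotientAddGroup.mk' (relSubgroup X n)) z ∈ AddSubgroup.closure S := by
    intro z
    refine FreeAbelianGroup.induction_on z ?_ ?_ ?_ ?_
    · rw [map_zero]; exact AddSubgroup.zero_mem _
    · intro x
      obtain ⟨y, rfl⟩ := hsurj x
      have h := hcell (B.cells 0 y)
      rw [(B.cells 0).symm_apply_apply] at h
      exact h
    · intro x hx
      rw [map_neg]
      exact AddSubgroup.neg_mem _ hx
    · intro x y hx hy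
      rw [map_add]
      exact AddSubgroup.add_mem _ hx hy
  rw [eq_top_iff]
  intro u _
  obtain ⟨z, rfl⟩ := QuotientAddGroup.mk'_surjective (relSubgroup X n) u
  exact hmem z
end

section
/- Let D be a diagram category and let π : D_0^□ → S be a surjective function onto a set S. Define a cubical complex X by X_0 = S, X_n = D_n^□ for n > 0, and, for a cube map a : C_0 → C_n, X(a^op) = π ∘ D^□(a^op) (with X(a^op) = D^□(a^op) when the target cell dimension is positive). Then for every n ≥ 0 there is an isomorphism U_n(X) ≅ Ab(D_{≤n}) / R, where R is the subgroup of Ab(D_{≤n}) generated by all elements s(x) − s(y) with x, y ∈ D_0^□ satisfying π(x) = π(y). -/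
open CategoryTheory Opposite
attribute [local instance] FintypeCat.fintype

/-- Isomorphism classes of objects of a category. -/
def ObjClass (C : Type) [SmallCategory C] :=
  Quot (fun a b : C => Nonempty (a ≅ b))

theorem card_eq_of_iso {C : Type} [SmallCategory C] (F : C ⥤ FintypeCat) {a b : C}
    (h : a ≅ b) : Fintype.card (F.obj a) = Fintype.card (F.obj b) :=
  Fintype.card_congr (FintypeCat.equivEquivIso.symm (F.mapIso h))

/-- The order `|a| = |F(a)|` of an isomorphism class of objects of a diagram category. -/
noncomputable def orderC (C : Type) [SmallCategory C] (F : C ⥤ FintypeCat) :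
    ObjClass C → ℕ :=
  Quot.lift (fun a => Fintype.card (F.obj a)) (fun _ _ h => card_eq_of_iso F h.some)

/-- `Ab(D_{≤n})`: the free abelian group on isomorphism classes of objects of order at
most `n`. -/
noncomputable def AbLe (C : Type) [SmallCategory C] (F : C ⥤ FintypeCat) (n : ℕ) :=
  FreeAbelianGroup {c : ObjClass C // orderC C F c ≤ n}

noncomputable instance (C : Type) [SmallCategory C] (F : C ⥤ FintypeCat) (n : ℕ) :
    AddCommGroup (AbLe C F n) := by
  unfold AbLe; infer_instance

variable {C : Type} [SmallCategory C] {F : C ⥤ FintypeCat}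

/-- A chosen subdiagram `a_S` of `a` corresponding to `S ⊆ F(a)`. -/
noncomputable def IsDiagramCat.subObj (hF : IsDiagramCat C F) (a : C) (S : Set (F.obj a)) :
    C :=
  (hF.sub a S).choose

/-- The chosen subdiagram inclusion `ι_S : a_S → a`. -/
noncomputable def IsDiagramCat.subIncl (hF : IsDiagramCat C F) (a : C) (S : Set (F.obj a)) :
    hF.subObj a S ⟶ a :=
  (hF.sub a S).choose_spec.choose

theorem IsDiagramCat.range_subIncl (hF : IsDiagramCat C F) (a : C) (S : Set (F.obj a)) :
    Set.range (F.map (hF.subIncl a S)) = S :=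
  (hF.sub a S).choose_spec.choose_spec

theorem IsDiagramCat.card_subObj (hF : IsDiagramCat C F) (a : C) (S : Finset (F.obj a)) :
    Fintype.card (F.obj (hF.subObj a (S : Set (F.obj a)))) = S.card := by
  classical
  have e1 := Equiv.ofInjective _ (hF.inj (hF.subIncl a (S : Set (F.obj a))))
  have e2 := Equiv.setCongr (hF.range_subIncl a (S : Set (F.obj a)))
  rw [Fintype.card_congr (e1.trans e2)]
  simp
/-- The isomorphism class of the subdiagram `a_S`, as a generator of `Ab(D_{≤n})`, for
`S ⊆ F(a)` with `|S| ≤ n`. -/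
noncomputable def IsDiagramCat.subClsLe (hF : IsDiagramCat C F) (n : ℕ) (a : C)
    (S : Finset (F.obj a)) (h : S.card ≤ n) : {c : ObjClass C // orderC C F c ≤ n} :=
  ⟨Quot.mk _ (hF.subObj a (S : Set (F.obj a))),
    le_of_eq_of_le (hF.card_subObj a S) h⟩

/-- `s` on a generator: `s(a) = ∑_{S ⊆ F(a), |S| ≤ n} a_S ∈ Ab(D_{≤n})`. -/
noncomputable def sFormula (hF : IsDiagramCat C F) (n : ℕ) (a : C) : AbLe C F n :=
  ∑ S : Finset (F.obj a),
    if h : S.card ≤ n then FreeAbelianGroup.of (hF.subClsLe n a S h) else 0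

open scoped Classical in
/-- `s₋` on a generator: `s₋(a) = ∑_{S ⊆ F(a)} (-1)^{|F(a) ∖ S|} · a_S ∈ Uₙ(D^□)`. -/
noncomputable def sInvFormula (hF : IsDiagramCat C F) (B : BoxComplex C F) (n : ℕ) (a : C) :
    UGroup B.X n :=
  ∑ S : Finset (F.obj a),
    ((-1 : ℤ) ^ (Sᶜ.card)) •
      mkU B.X n ((B.cells 0).symm (objCell C F (hF.subObj a (S : Set (F.obj a)))))
/-! ### Auxiliary combinatorial lemmas -/

section Comb
variable {α : Type*} [DecidableEq α] {G : Type*} [AddCommMonoid G]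

theorem aux_core_sum (L U : Finset α) (hU : U ⊆ L) (g : ℕ → G) :
    (∑ A ∈ L.powerset, if U ⊆ A then g A.card else 0)
      = ∑ B ∈ (L \ U).powerset, g (U.card + B.card) := by
  rw [← Finset.sum_filter]
  refine Finset.sum_nbij' (fun A => A \ U) (fun B => U ∪ B) ?_ ?_ ?_ ?_ ?_
  · intro A hA
    simp only [Finset.mem_filter, Finset.mem_powerset] at hA ⊢
    exact Finset.sdiff_subset_sdiff hA.1 (Finset.Subset.refl U)
  · intro B hB
    simp only [Finset.mem_powerset] at hB
    simp only [Finset.mem_filter, Finset.mem_powerset]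
    exact ⟨Finset.union_subset hU (hB.trans Finset.sdiff_subset), Finset.subset_union_left⟩
  · intro A hA
    simp only [Finset.mem_filter, Finset.mem_powerset] at hA
    exact Finset.union_sdiff_of_subset hA.2
  · intro B hB
    simp only [Finset.mem_powerset] at hB
    exact Finset.union_sdiff_cancel_left
      (Finset.disjoint_left.mpr fun a haU haB => (Finset.mem_sdiff.mp (hB haB)).2 haU)
  · intro A hA
    simp only [Finset.mem_filter, Finset.mem_powerset] at hA
    have h1 : U.card ≤ A.card := Finset.card_le_card hA.2
    rw [Finset.card_sdiff_of_subset hA.2]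
    congr 1
    omega

theorem aux_comb_a (L U : Finset α) (hU : U ⊆ L) :
    (∑ A ∈ L.powerset, if U ⊆ A then ((-1 : ℤ) ^ A.card) else 0)
      = if U = L then (-1) ^ L.card else 0 := by
  rw [aux_core_sum L U hU (fun k => (-1 : ℤ) ^ k)]
  simp_rw [pow_add]
  rw [← Finset.mul_sum, Finset.sum_powerset_neg_one_pow_card]
  by_cases h : U = L
  · subst h; simp
  · rw [if_neg h, if_neg (fun hc => h (Finset.Subset.antisymm hU
      (Finset.sdiff_eq_empty_iff_subset.mp hc))), mul_zero]

theorem aux_comb_b (L U : Finset α) (hU : U ⊆ L) :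
    (∑ A ∈ L.powerset, if U ⊆ A then ((-1 : ℤ) ^ (A.card - U.card)) else 0)
      = if U = L then 1 else 0 := by
  rw [aux_core_sum L U hU (fun k => (-1 : ℤ) ^ (k - U.card))]
  simp_rw [Nat.add_sub_cancel_left]
  rw [Finset.sum_powerset_neg_one_pow_card]
  by_cases h : U = L
  · subst h; simp
  · rw [if_neg h, if_neg (fun hc => h (Finset.Subset.antisymm hU
      (Finset.sdiff_eq_empty_iff_subset.mp hc)))]

theorem aux_sum_powerset_eq [Fintype α] (K : Finset α) (f : Finset α → G) :
    ∑ T ∈ K.powerset, f T = ∑ T : Finset α, if T ⊆ K then f T else 0 := by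
  rw [← Finset.sum_filter]
  congr 1
  ext T
  simp [Finset.mem_powerset]

theorem aux_exchange {ι : Type*} [Fintype α] (s : Finset ι) (K : ι → Finset α)
    (g : ι → Finset α → G) :
    ∑ i ∈ s, ∑ T ∈ (K i).powerset, g i T
      = ∑ T : Finset α, ∑ i ∈ s, if T ⊆ K i then g i T else 0 := by
  simp_rw [aux_sum_powerset_eq]
  exact Finset.sum_comm

theorem aux_split {u v : Finset α} (huv : Disjoint u v) (f : Finset α → G) :
    ∑ T ∈ (u ∪ v).powerset, f T = ∑ M ∈ u.powerset, ∑ A ∈ v.powerset, f (M ∪ A) := by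
  rw [← Finset.sum_product']
  refine Finset.sum_nbij' (fun T => (T ∩ u, T ∩ v)) (fun p => p.1 ∪ p.2) ?_ ?_ ?_ ?_ ?_
  · intro T hT
    simp only [Finset.mem_product, Finset.mem_powerset]
    exact ⟨Finset.inter_subset_right, Finset.inter_subset_right⟩
  · intro p hp
    simp only [Finset.mem_product, Finset.mem_powerset] at hp
    simp only [Finset.mem_powerset]
    exact Finset.union_subset_union hp.1 hp.2
  · intro T hT
    simp only [Finset.mem_powerset] at hT
    show T ∩ u ∪ T ∩ v = T
    rw [← Finset.inter_union_distrib_left]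
    exact Finset.inter_eq_left.mpr hT
  · intro p hp
    simp only [Finset.mem_product, Finset.mem_powerset] at hp
    show ((p.1 ∪ p.2) ∩ u, (p.1 ∪ p.2) ∩ v) = p
    have h1 : (p.1 ∪ p.2) ∩ u = p.1 := by
      rw [Finset.union_inter_distrib_right, Finset.inter_eq_left.mpr hp.1,
        Finset.disjoint_iff_inter_eq_empty.mp ((huv.symm).mono_left hp.2), Finset.union_empty]
    have h2 : (p.1 ∪ p.2) ∩ v = p.2 := by
      rw [Finset.union_inter_distrib_right, Finset.inter_eq_left.mpr hp.2,
        Finset.disjoint_iff_inter_eq_empty.mp (huv.mono_left hp.1), Finset.empty_union]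
    exact Prod.ext h1 h2
  · intro T hT
    simp only [Finset.mem_powerset] at hT
    show f T = f (T ∩ u ∪ T ∩ v)
    rw [← Finset.inter_union_distrib_left, Finset.inter_eq_left.mpr hT]

theorem aux_neg_one_pow_sub {a b : ℕ} (h : b ≤ a) :
    (-1 : ℤ) ^ (a - b) = (-1) ^ a * (-1) ^ b := by
  have h1 : (-1 : ℤ) ^ a = (-1) ^ (a - b) * (-1) ^ b := by
    rw [← pow_add, Nat.sub_add_cancel h]
  rw [h1, mul_assoc, ← pow_add]
  have he : Even (b + b) := ⟨b, rfl⟩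
  rw [he.neg_one_pow, mul_one]

theorem aux_reindex_inj {β : Type*} [Fintype α] [DecidableEq β] (e : α → β)
    (he : Function.Injective e) (K : Finset β) (hr : Set.range e = ↑K)
    (f : Finset α → G) (f' : Finset β → G) (h : ∀ Q, f Q = f' (Q.image e)) :
    ∑ Q : Finset α, f Q = ∑ T ∈ K.powerset, f' T := by
  refine Finset.sum_nbij' (fun Q => Q.image e)
    (fun T => Finset.univ.filter (fun x => e x ∈ T)) ?_ ?_ ?_ ?_ (fun Q _ => h Q)
  · intro Q _
    simp only [Finset.mem_powerset]
    intro b hb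
    rw [Finset.mem_image] at hb
    obtain ⟨x, -, rfl⟩ := hb
    have hx : e x ∈ Set.range e := ⟨x, rfl⟩
    rw [hr] at hx
    exact hx
  · intro T _
    exact Finset.mem_univ _
  · intro Q _
    ext x
    simp [he.eq_iff]
  · intro T hT
    simp only [Finset.mem_powerset] at hT
    ext b
    simp only [Finset.mem_image, Finset.mem_filter, Finset.mem_univ, true_and]
    constructor
    · rintro ⟨x, hx, rfl⟩
      exact hx
    · intro hb
      have hb' : b ∈ Set.range e := by rw [hr]; exact hT hb
      obtain ⟨x, rfl⟩ := hb'
      exact ⟨x, hb, rfl⟩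

theorem aux_reindex_image {β : Type*} [Fintype α] [DecidableEq β] (lab : α → β)
    (hinj : Function.Injective lab) (f : Finset β → G) :
    ∑ A ∈ (Finset.image lab Finset.univ).powerset, f A = ∑ I : Finset α, f (I.image lab) := by
  refine (aux_reindex_inj lab hinj (Finset.image lab Finset.univ) ?_
    (fun I => f (I.image lab)) f (fun _ => rfl)).symm
  ext b
  simp

end Comb

section SmulAux
variable {G : Type*} [AddCommGroup G]

theorem aux_ite_smul (P : Prop) [Decidable P] (c : ℤ) (x : G) :
    (if P then c • x else 0) = (if P then c else 0) • x := by
  split_ifs <;> simp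

theorem aux_sum_zsmul {ι : Type*} (s : Finset ι) (c : ι → ℤ) (x : G) :
    ∑ i ∈ s, c i • x = (∑ i ∈ s, c i) • x := by
  have h := map_sum (zmultiplesHom G x) c s
  simp only [zmultiplesHom_apply] at h
  exact h.symm

theorem aux_sum_if_univ_smul {α : Type*} [Fintype α] [DecidableEq α] (val : Finset α → G) :
    ∑ T : Finset α, (if T = Finset.univ then (1 : ℤ) else 0) • val T = val Finset.univ := by
  rw [Finset.sum_eq_single_of_mem Finset.univ (Finset.mem_univ _)]
  · rw [if_pos rfl, one_smul]
  · intro T _ hT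
    rw [if_neg hT, zero_smul]

theorem aux_sumex {ι : Type*} [Fintype ι] {α : Type*} [Fintype α] [DecidableEq α]
    (K : ι → Finset α) (w : ι → Finset α → ℤ) (val : Finset α → G) :
    ∑ i : ι, ∑ T ∈ (K i).powerset, w i T • val T
      = ∑ T : Finset α, (∑ i : ι, if T ⊆ K i then w i T else 0) • val T := by
  rw [aux_exchange Finset.univ K (fun i T => w i T • val T)]
  refine Finset.sum_congr rfl fun T _ => ?_
  rw [← aux_sum_zsmul]
  exact Finset.sum_congr rfl fun i _ => aux_ite_smul _ _ _

end SmulAux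

/-! ### Cube auxiliary -/

instance cube0_subsingleton : Subsingleton (Cube 0) :=
  ⟨fun a b => funext fun i => i.elim0⟩

def boolFinsetEquiv (k : ℕ) : Cube k ≃ Finset (Fin k) where
  toFun v := Finset.univ.filter (fun i => v i = true)
  invFun I := fun i => decide (i ∈ I)
  left_inv v := by
    funext i
    by_cases h : v i <;> simp [h]
  right_inv I := by
    ext i
    simp

noncomputable def cubeHomVertexEquiv (k : ℕ) : (cubeObj 0 ⟶ cubeObj k) ≃ Cube k where
  toFun f := f.1 (fun j => j.elim0)
  invFun v := ⟨fun _ => v, Fin.elim0, v, fun x => x.elim0, fun b i => i.elim0,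
    by rintro b ⟨x, rfl⟩ i _; rfl⟩
  left_inv f := Subtype.ext (funext fun b => congrArg f.1 (funext fun j => j.elim0))
  right_inv v := rfl

/-! ### Diagram category auxiliary -/

section DiagAux
variable {C : Type} [SmallCategory C] {F : C ⥤ FintypeCat}

theorem objCell_eq_of_iso {a b : C} (h : a ≅ b) : objCell C F a = objCell C F b :=
  Quot.sound ⟨h, fun i => i.elim0⟩

theorem range_map_comp {a b c : C} (f : a ⟶ b) (g : b ⟶ c) :
    Set.range (F.map (f ≫ g)) = F.map g '' Set.range (F.map f) := by
  rw [F.map_comp]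
  ext y
  constructor
  · rintro ⟨x, rfl⟩
    exact ⟨F.map f x, ⟨x, rfl⟩, (FintypeCat.comp_apply _ _ _).symm⟩
  · rintro ⟨z, ⟨x, rfl⟩, rfl⟩
    exact ⟨x, FintypeCat.comp_apply _ _ _⟩

theorem subObj_map_iso (hF : IsDiagramCat C F) {a b : C} (f : a ⟶ b) (T : Set (F.obj a)) :
    Nonempty (hF.subObj a T ≅ hF.subObj b (F.map f '' T)) := by
  have h : Set.range (F.map (hF.subIncl a T ≫ f))
      = Set.range (F.map (hF.subIncl b (F.map f '' T))) := by
    rw [range_map_comp, hF.range_subIncl, hF.range_subIncl]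
  exact ⟨(hF.unique_sub _ _ h).choose⟩

theorem subObj_univ_iso (hF : IsDiagramCat C F) (a : C) :
    Nonempty (hF.subObj a Set.univ ≅ a) := by
  have h : Set.range (F.map (hF.subIncl a Set.univ)) = Set.range (F.map (𝟙 a)) := by
    rw [hF.range_subIncl, F.map_id]
    symm
    apply Set.eq_univ_of_forall
    intro y
    exact ⟨y, FintypeCat.id_apply _ _⟩
  exact ⟨(hF.unique_sub _ _ h).choose⟩

theorem image_compl_inj {α β : Type*} (e : α → β) (he : Function.Injective e) (s : Set α) :
    e '' sᶜ = Set.range e \ e '' s := by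
  ext y
  constructor
  · rintro ⟨x, hx, rfl⟩
    refine ⟨⟨x, rfl⟩, ?_⟩
    rintro ⟨x', hx', hxx⟩
    exact hx (he hxx ▸ hx')
  · rintro ⟨⟨x, rfl⟩, hy⟩
    exact ⟨x, fun hx => hy ⟨x, hx, rfl⟩, rfl⟩

end DiagAux

/-! ### Main auxiliary constructions -/

section MainAux

open scoped Classical

variable {C : Type} [SmallCategory C] {F : C ⥤ FintypeCat}
  (hF : IsDiagramCat C F) (B : BoxComplex C F)
  {S : Type} (π : DCell C F 0 → S)
  (X : CubicalComplex) (e0 : X.obj (op (cubeObj 0)) ≃ S)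
  (epos : ∀ k : ℕ, X.obj (op (cubeObj (k + 1))) ≃ B.X.obj (op (cubeObj (k + 1))))
  (n : ℕ)

/-- The generator of `Uₙ(X)` attached to the class of an object. -/
noncomputable def gval (a : C) : UGroup X n :=
  mkU X n (e0.symm (π (objCell C F a)))

theorem gval_iso {a b : C} (h : Nonempty (a ≅ b)) :
    gval π X e0 n a = gval π X e0 n b := by
  unfold gval
  rw [objCell_eq_of_iso h.some]

/-- The canonical quotient map onto `Uₙ(X)` as a hom. -/
noncomputable def mkUhom : FreeAbelianGroup (X.obj (op (cubeObj 0))) →+ UGroup X n :=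
  QuotientAddGroup.mk' (relSubgroup X n)

theorem mkUhom_of (x : X.obj (op (cubeObj 0))) :
    mkUhom X n (FreeAbelianGroup.of x) = mkU X n x := rfl

theorem mkUhom_relationElt (c : X.obj (op (cubeObj (n + 1)))) :
    mkUhom X n (relationElt X n c) = 0 :=
  (QuotientAddGroup.eq_zero_iff _).mpr (AddSubgroup.subset_closure ⟨c, rfl⟩)

/-- `s₋` value. -/
noncomputable def tval (a : C) : UGroup X n :=
  ∑ Q : Finset (F.obj a),
    ((-1 : ℤ) ^ Qᶜ.card) • gval π X e0 n (hF.subObj a (↑Q : Set (F.obj a)))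

theorem tval_iso {a b : C} (h : Nonempty (a ≅ b)) :
    tval hF π X e0 n a = tval hF π X e0 n b := by
  obtain ⟨h⟩ := h
  have hbij : Function.Bijective (F.map h.hom) := by
    refine ⟨hF.inj _, fun y => ⟨F.map h.inv y, ?_⟩⟩
    rw [← FintypeCat.comp_apply (F.map h.inv) (F.map h.hom) y, ← F.map_comp,
      Iso.inv_hom_id, F.map_id, FintypeCat.id_apply]
  set eF : F.obj a ≃ F.obj b := Equiv.ofBijective _ hbij with heF
  unfold tval
  refine Fintype.sum_equiv (Equiv.finsetCongr eF) _ _ ?_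
  intro Q
  have hc1 : ((Equiv.finsetCongr eF) Q).card = Q.card := by
    simp [Equiv.finsetCongr_apply]
  have hcompl : ((Equiv.finsetCongr eF) Q)ᶜ.card = Qᶜ.card := by
    rw [Finset.card_compl, Finset.card_compl, hc1, Fintype.card_congr eF.symm]
  rw [hcompl]
  congr 1
  have hco : (↑((Equiv.finsetCongr eF) Q) : Set (F.obj b)) = F.map h.hom '' ↑Q := by
    rw [Equiv.finsetCongr_apply, Finset.coe_map]
    rfl
  rw [hco]
  exact gval_iso π X e0 n (subObj_map_iso hF h.hom (↑Q : Set (F.obj a)))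

/-- Corner computation: the alternating corner sum of the `(n+1)`-cell of `D^□` given by a
pair `(q, lab)`, evaluated through any function on `0`-cells, rewritten as a sum over subsets
of the label set. -/
theorem corner_sum {G : Type} [AddCommGroup G] (val : DCell C F 0 → G)
    (pc : PreCell C F (n + 1)) :
    (∑ f : (cubeObj 0 ⟶ cubeObj (n + 1)),
        ((-1 : ℤ) ^ cubeWeight f) •
          val (B.cells 0 (B.X.map f.op ((B.cells (n + 1)).symm (Quot.mk _ pc)))))
      = ∑ I : Finset (Fin (n + 1)),
        ((-1 : ℤ) ^ I.card) •
          val (objCell C F (hF.subObj pc.q ((pc.lab '' ((↑I : Set (Fin (n + 1)))ᶜ))ᶜ))) := by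
  refine Fintype.sum_equiv ((cubeHomVertexEquiv (n + 1)).trans (boolFinsetEquiv (n + 1))) _ _ ?_
  intro f
  set v : Cube (n + 1) := cubeHomVertexEquiv (n + 1) f with hv
  set I : Finset (Fin (n + 1)) := boolFinsetEquiv (n + 1) v with hI
  have htr : ((cubeHomVertexEquiv (n + 1)).trans (boolFinsetEquiv (n + 1))) f = I := rfl
  rw [htr]
  have hw : cubeWeight f = I.card := rfl
  have hms := B.map_spec f Fin.elim0 v (fun x => x.elim0) (fun b i => i.elim0)
    ?_ pc ⟨hF.subObj pc.q (KeepSet pc Fin.elim0 v), fun i => i.elim0, fun i => i.elim0⟩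
    (hF.subIncl pc.q (KeepSet pc Fin.elim0 v)) (hF.range_subIncl _ _) (fun i => i.elim0)
  · have hobj : (Quot.mk _ (⟨hF.subObj pc.q (KeepSet pc Fin.elim0 v), fun i => i.elim0,
        fun i => i.elim0⟩ : PreCell C F 0) : DCell C F 0)
        = objCell C F (hF.subObj pc.q (KeepSet pc Fin.elim0 v)) := rfl
    have hset : KeepSet pc Fin.elim0 v = (pc.lab '' ((↑I : Set (Fin (n + 1)))ᶜ))ᶜ := by
      unfold KeepSet
      congr 1
      apply congrArg
      ext ℓ
      simp only [Set.mem_setOf_eq, Set.mem_compl_iff, Finset.coe_filter, hI,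
        boolFinsetEquiv, Equiv.coe_fn_mk, Finset.mem_coe, Finset.mem_filter, Finset.mem_univ,
        true_and]
      constructor
      · rintro ⟨-, h2⟩
        simp [h2]
      · intro h2
        refine ⟨fun j => j.elim0, ?_⟩
        cases hvl : v ℓ
        · rfl
        · exact absurd hvl h2
    rw [hw, hms, hobj, hset]
  · rintro b ⟨x, rfl⟩ i -
    have hx : x = (fun j : Fin 0 => j.elim0) := funext fun j => j.elim0
    rw [hx]
    rfl

/-- The basic relation in `Uₙ(X)`: alternating sums over subdiagrams obtained by adding to a
fixed finite set `M` any subset of an `(n+1)`-element labelled set disjoint from `M`. -/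
theorem rel2
    (hmap0 : ∀ (k : ℕ) (a : cubeObj 0 ⟶ cubeObj (k + 1)) (c : X.obj (op (cubeObj (k + 1)))),
      e0 (X.map a.op c) = π (B.cells 0 (B.X.map a.op (epos k c))))
    (b : C) (lab : Fin (n + 1) → F.obj b) (hinj : Function.Injective lab)
    (M : Finset (F.obj b)) (hM : ∀ i, lab i ∉ M) :
    ∑ I : Finset (Fin (n + 1)),
      ((-1 : ℤ) ^ I.card) •
        gval π X e0 n (hF.subObj b ((↑M : Set (F.obj b)) ∪ lab '' ↑I)) = 0 := by
  classical
  set L : Finset (F.obj b) := Finset.image lab Finset.univ with hL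
  set W : Set (F.obj b) := (↑(M ∪ L) : Set (F.obj b)) with hW
  set ι := hF.subIncl b W with hι
  set e := F.map ι with he
  have heinj : Function.Injective e := hF.inj ι
  have hrange : Set.range e = W := hF.range_subIncl b W
  have hmem : ∀ i, ∃ y, e y = lab i := by
    intro i
    have h1 : lab i ∈ Set.range e := by
      rw [hrange, hW]
      simp only [Finset.coe_union, Set.mem_union, Finset.mem_coe]
      right
      rw [hL]
      exact Finset.mem_image_of_mem lab (Finset.mem_univ i)
    exact h1
  choose lab' hlab' using hmem
  have hinj' : Function.Injective lab' := fun i j hij => hinj (by rw [← hlab', ← hlab', hij])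
  set pc : PreCell C F (n + 1) := ⟨hF.subObj b W, lab', hinj'⟩ with hpc
  set c : X.obj (op (cubeObj (n + 1))) := (epos n).symm ((B.cells (n + 1)).symm (Quot.mk _ pc))
    with hc
  set val : DCell C F 0 → UGroup X n := fun d => mkU X n (e0.symm (π d)) with hvald
  have hterm : ∀ f : cubeObj 0 ⟶ cubeObj (n + 1),
      mkUhom X n (FreeAbelianGroup.of (X.map f.op c))
        = val (B.cells 0 (B.X.map f.op ((B.cells (n + 1)).symm (Quot.mk _ pc)))) := by
    intro f
    have h2 : X.map f.op c = e0.symm (π (B.cells 0 (B.X.map f.op (epos n c)))) := by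
      rw [← hmap0 n f c, Equiv.symm_apply_apply]
    have h3 : epos n c = (B.cells (n + 1)).symm (Quot.mk _ pc) := by
      rw [hc, Equiv.apply_symm_apply]
    rw [mkUhom_of, h2, h3]
  have hrel : (∑ f : (cubeObj 0 ⟶ cubeObj (n + 1)),
      ((-1 : ℤ) ^ cubeWeight f) •
        val (B.cells 0 (B.X.map f.op ((B.cells (n + 1)).symm (Quot.mk _ pc))))) = 0 := by
    have h4 : mkUhom X n (relationElt X n c)
        = ∑ f : (cubeObj 0 ⟶ cubeObj (n + 1)),
            ((-1 : ℤ) ^ cubeWeight f) •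
              val (B.cells 0 (B.X.map f.op ((B.cells (n + 1)).symm (Quot.mk _ pc)))) := by
      rw [relationElt, map_sum]
      refine Finset.sum_congr rfl fun f _ => ?_
      rw [map_zsmul, hterm f]
    rw [← h4, mkUhom_relationElt]
  rw [corner_sum hF B n val pc] at hrel
  refine Eq.trans (Finset.sum_congr rfl fun I _ => ?_) hrel
  congr 1
  have hseteq : e '' ((pc.lab '' ((↑I : Set (Fin (n + 1)))ᶜ))ᶜ)
      = (↑M : Set (F.obj b)) ∪ lab '' ↑I := by
    rw [image_compl_inj e heinj, hrange]
    have himg : e '' (pc.lab '' ((↑I : Set (Fin (n + 1)))ᶜ)) = lab '' ((↑I : Set (Fin (n+1)))ᶜ) := by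
      rw [← Set.image_comp]
      have hcomp : e ∘ pc.lab = lab := funext fun i => hlab' i
      rw [hcomp]
    rw [himg]
    ext x
    simp only [Set.mem_diff, hW, Finset.coe_union, Set.mem_union, Finset.mem_coe,
      Set.mem_image, Set.mem_compl_iff]
    constructor
    · rintro ⟨h1 | h1, h2⟩
      · exact Or.inl h1
      · rw [hL, Finset.mem_image] at h1
        obtain ⟨i, -, rfl⟩ := h1
        right
        refine ⟨i, ?_, rfl⟩
        by_contra hiI
        exact h2 ⟨i, hiI, rfl⟩
    · rintro (h1 | ⟨i, hiI, rfl⟩)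
      · refine ⟨Or.inl h1, ?_⟩
        rintro ⟨j, -, rfl⟩
        exact hM j h1
      · refine ⟨Or.inr ?_, ?_⟩
        · rw [hL]
          exact Finset.mem_image_of_mem lab (Finset.mem_univ i)
        · rintro ⟨j, hj, hji⟩
          exact hj (hinj hji ▸ hiI)
  have hgv : val (objCell C F (hF.subObj pc.q ((pc.lab '' ((↑I : Set (Fin (n + 1)))ᶜ))ᶜ)))
      = gval π X e0 n (hF.subObj pc.q ((pc.lab '' ((↑I : Set (Fin (n + 1)))ᶜ))ᶜ)) := rfl
  rw [hgv, ← hseteq]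
  exact (gval_iso π X e0 n (subObj_map_iso hF ι _)).symm

/-- `s₋` vanishes on objects of order at least `n+1`. -/
theorem tval_zero
    (hmap0 : ∀ (k : ℕ) (a : cubeObj 0 ⟶ cubeObj (k + 1)) (c : X.obj (op (cubeObj (k + 1)))),
      e0 (X.map a.op c) = π (B.cells 0 (B.X.map a.op (epos k c))))
    (b : C) (hb : n + 1 ≤ Fintype.card (F.obj b)) :
    tval hF π X e0 n b = 0 := by
  classical
  obtain ⟨L, -, hL⟩ := Finset.exists_subset_card_eq
    (show n + 1 ≤ (Finset.univ : Finset (F.obj b)).card by simpa using hb)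
  set lab : Fin (n + 1) → F.obj b :=
    fun i => (((Finset.equivFinOfCardEq hL).symm i : {x // x ∈ L}) : F.obj b) with hlab
  have hinj : Function.Injective lab :=
    fun i j h => (Finset.equivFinOfCardEq hL).symm.injective (Subtype.ext h)
  have hLim : Finset.image lab Finset.univ = L := by
    ext x
    simp only [Finset.mem_image, Finset.mem_univ, true_and]
    constructor
    · rintro ⟨i, rfl⟩
      exact ((Finset.equivFinOfCardEq hL).symm i).2
    · intro hx
      exact ⟨Finset.equivFinOfCardEq hL ⟨x, hx⟩, by simp [hlab]⟩
  unfold tval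
  rw [← Finset.powerset_univ]
  rw [show (Finset.univ : Finset (F.obj b)) = (Finset.univ \ L) ∪ L from
    (Finset.sdiff_union_of_subset (Finset.subset_univ L)).symm]
  rw [aux_split (Finset.sdiff_disjoint)]
  refine Finset.sum_eq_zero fun M hM => ?_
  have hML : Disjoint M L :=
    Finset.sdiff_disjoint.mono_left (Finset.mem_powerset.mp hM)
  have hstep : ∀ A ∈ L.powerset,
      ((-1 : ℤ) ^ ((M ∪ A)ᶜ).card) • gval π X e0 n (hF.subObj b (↑(M ∪ A) : Set (F.obj b)))
        = ((-1 : ℤ) ^ (Fintype.card (F.obj b) - M.card)) •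
            (((-1 : ℤ) ^ A.card) • gval π X e0 n (hF.subObj b (↑(M ∪ A) : Set (F.obj b)))) := by
    intro A hA
    have hAL : A ⊆ L := Finset.mem_powerset.mp hA
    have hdisj : Disjoint M A := hML.mono_right hAL
    have hcard : (M ∪ A).card = M.card + A.card := Finset.card_union_of_disjoint hdisj
    have hle : M.card + A.card ≤ Fintype.card (F.obj b) := by
      rw [← hcard]
      exact Finset.card_le_univ _
    have h5 : Fintype.card (F.obj b) - (M ∪ A).card
        = (Fintype.card (F.obj b) - M.card) - A.card := by
      rw [hcard]; omega
    rw [Finset.card_compl, h5,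
      aux_neg_one_pow_sub (show A.card ≤ Fintype.card (F.obj b) - M.card by omega)]
    exact mul_smul _ _ _
  rw [Finset.sum_congr rfl hstep, ← Finset.smul_sum]
  rw [← hLim, aux_reindex_image lab hinj
    (fun A => ((-1 : ℤ) ^ A.card) • gval π X e0 n (hF.subObj b (↑(M ∪ A) : Set (F.obj b))))]
  have hconv : ∀ I : Finset (Fin (n + 1)),
      ((-1 : ℤ) ^ (I.image lab).card) •
          gval π X e0 n (hF.subObj b (↑(M ∪ I.image lab) : Set (F.obj b)))
        = ((-1 : ℤ) ^ I.card) •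
            gval π X e0 n (hF.subObj b ((↑M : Set (F.obj b)) ∪ lab '' ↑I)) := by
    intro I
    rw [Finset.card_image_of_injective _ hinj]
    congr 2
    rw [Finset.coe_union, Finset.coe_image]
  rw [Finset.sum_congr rfl fun I _ => hconv I]
  rw [rel2 hF B π X e0 epos n hmap0 b lab hinj M
    (fun i hi => Finset.disjoint_right.mp hML (hLim ▸ Finset.mem_image_of_mem lab
      (Finset.mem_univ i)) hi), smul_zero]

/-- The `s`-summand attached to a subset. -/
noncomputable def phiGen (a : C) (T : Finset (F.obj a)) : AbLe C F n :=
  if h : T.card ≤ n then FreeAbelianGroup.of (hF.subClsLe n a T h) else 0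

theorem sFormula_eq_phi (a : C) :
    sFormula hF n a = ∑ T : Finset (F.obj a), phiGen hF n a T := rfl

theorem phiGen_image {a b : C} (f : a ⟶ b) (Q : Finset (F.obj a)) :
    phiGen hF n a Q = phiGen hF n b (Q.image (F.map f)) := by
  have hc : (Q.image (F.map f)).card = Q.card := Finset.card_image_of_injective _ (hF.inj f)
  unfold phiGen
  by_cases h : Q.card ≤ n
  · erw [dif_pos h, dif_pos (by rw [hc]; exact h)]
    congr 1
    apply Subtype.ext
    show Quot.mk _ (hF.subObj a (↑Q : Set (F.obj a)))
      = Quot.mk _ (hF.subObj b (↑(Q.image (F.map f)) : Set (F.obj b)))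
    rw [Finset.coe_image]
    exact Quot.sound (subObj_map_iso hF f (↑Q : Set (F.obj a)))
  · erw [dif_neg h, dif_neg (by rw [hc]; exact h)]

theorem sFormula_subObj (q : C) (K : Finset (F.obj q)) :
    sFormula hF n (hF.subObj q (↑K : Set (F.obj q)))
      = ∑ T ∈ K.powerset, phiGen hF n q T := by
  rw [sFormula_eq_phi]
  exact aux_reindex_inj (F.map (hF.subIncl q (↑K : Set (F.obj q)))) (hF.inj _) K
    (hF.range_subIncl q (↑K : Set (F.obj q))) _ _
    (fun Q => phiGen_image hF n (hF.subIncl q (↑K : Set (F.obj q))) Q)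

theorem tval_subObj (a : C) (K : Finset (F.obj a)) :
    tval hF π X e0 n (hF.subObj a (↑K : Set (F.obj a)))
      = ∑ T ∈ K.powerset,
          ((-1 : ℤ) ^ (K.card - T.card)) • gval π X e0 n (hF.subObj a (↑T : Set (F.obj a))) := by
  unfold tval
  refine aux_reindex_inj (F.map (hF.subIncl a (↑K : Set (F.obj a)))) (hF.inj _) K
    (hF.range_subIncl a (↑K : Set (F.obj a))) _ _ ?_
  intro Q
  have hc : (Q.image (F.map (hF.subIncl a (↑K : Set (F.obj a))))).card = Q.card :=
    Finset.card_image_of_injective _ (hF.inj _)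
  have hcompl : Qᶜ.card = K.card - Q.card := by
    rw [Finset.card_compl, hF.card_subObj a K]
  rw [hcompl, hc]
  congr 1
  have hgi := gval_iso π X e0 n
    (subObj_map_iso hF (hF.subIncl a (↑K : Set (F.obj a))) (↑Q : Set _))
  rw [hgi, Finset.coe_image]

/-- The generator map of `Ψ`. -/
noncomputable def psiGen : {c : ObjClass C // orderC C F c ≤ n} → UGroup X n :=
  fun c => Quot.lift (tval hF π X e0 n) (fun _ _ h => tval_iso hF π X e0 n h) c.1

theorem psiL_sFormula
    (hmap0 : ∀ (k : ℕ) (a : cubeObj 0 ⟶ cubeObj (k + 1)) (c : X.obj (op (cubeObj (k + 1)))),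
      e0 (X.map a.op c) = π (B.cells 0 (B.X.map a.op (epos k c))))
    (a : C) :
    FreeAbelianGroup.lift (psiGen hF π X e0 n) (sFormula hF n a) = gval π X e0 n a := by
  classical
  rw [sFormula_eq_phi]
  refine (map_sum (FreeAbelianGroup.lift (psiGen hF π X e0 n)) _ _).trans ?_
  have h1 : ∀ T : Finset (F.obj a),
      FreeAbelianGroup.lift (psiGen hF π X e0 n) (phiGen hF n a T)
        = tval hF π X e0 n (hF.subObj a (↑T : Set (F.obj a))) := by
    intro T
    unfold phiGen
    by_cases h : T.card ≤ n
    · erw [dif_pos h, FreeAbelianGroup.lift_apply_of]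
      rfl
    · erw [dif_neg h, map_zero]
      symm
      apply tval_zero hF B π X e0 epos n hmap0
      rw [hF.card_subObj a T]
      omega
  rw [Finset.sum_congr rfl fun T _ => h1 T]
  rw [Finset.sum_congr rfl fun T _ => tval_subObj hF π X e0 n a T]
  rw [aux_sumex (fun K : Finset (F.obj a) => K)
    (fun K T => (-1 : ℤ) ^ (K.card - T.card))
    (fun T => gval π X e0 n (hF.subObj a (↑T : Set (F.obj a))))]
  have h2 : ∀ T : Finset (F.obj a),
      (∑ K : Finset (F.obj a), if T ⊆ K then ((-1 : ℤ) ^ (K.card - T.card)) else 0)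
        = if T = Finset.univ then 1 else 0 := by
    intro T
    rw [← Finset.powerset_univ]
    exact aux_comb_b Finset.univ T (Finset.subset_univ T)
  rw [Finset.sum_congr rfl fun T _ => by rw [h2 T]]
  rw [aux_sum_if_univ_smul]
  rw [show ((Finset.univ : Finset (F.obj a)) : Set (F.obj a)) = Set.univ from Finset.coe_univ]
  exact gval_iso π X e0 n (subObj_univ_iso hF a)

/-- `s` of the corner sum vanishes identically in `Ab(D_{≤n})`. -/
theorem sFormula_rel (q : C) (lab : Fin (n + 1) → F.obj q) (hinj : Function.Injective lab) :
    ∑ I : Finset (Fin (n + 1)),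
      ((-1 : ℤ) ^ I.card) •
        sFormula hF n (hF.subObj q ((lab '' ((↑I : Set (Fin (n + 1)))ᶜ))ᶜ)) = 0 := by
  classical
  have hKset : ∀ I : Finset (Fin (n + 1)),
      ((lab '' ((↑I : Set (Fin (n + 1)))ᶜ))ᶜ : Set (F.obj q))
        = ↑((Finset.image lab Iᶜ)ᶜ) := by
    intro I
    rw [Finset.coe_compl, Finset.coe_image, Finset.coe_compl]
  have hstep : ∀ I : Finset (Fin (n + 1)),
      ((-1 : ℤ) ^ I.card) •
          sFormula hF n (hF.subObj q ((lab '' ((↑I : Set (Fin (n + 1)))ᶜ))ᶜ))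
        = ∑ T ∈ ((Finset.image lab Iᶜ)ᶜ).powerset,
            ((-1 : ℤ) ^ I.card) • phiGen hF n q T := by
    intro I
    rw [hKset I, sFormula_subObj hF n q ((Finset.image lab Iᶜ)ᶜ), Finset.smul_sum]
  rw [Finset.sum_congr rfl fun I _ => hstep I]
  rw [aux_sumex (fun I : Finset (Fin (n + 1)) => (Finset.image lab Iᶜ)ᶜ)
    (fun I _ => (-1 : ℤ) ^ I.card) (phiGen hF n q)]
  refine Finset.sum_eq_zero fun T _ => ?_
  have hcond : ∀ I : Finset (Fin (n + 1)),
      (T ⊆ (Finset.image lab Iᶜ)ᶜ) ↔ (Finset.univ.filter (fun i => lab i ∈ T)) ⊆ I := by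
    intro I
    constructor
    · intro h i hi
      rw [Finset.mem_filter] at hi
      by_contra hiI
      exact (Finset.mem_compl.mp (h hi.2))
        (Finset.mem_image_of_mem lab (Finset.mem_compl.mpr hiI))
    · intro h x hx
      rw [Finset.mem_compl]
      intro hx'
      rw [Finset.mem_image] at hx'
      obtain ⟨i, hiIc, rfl⟩ := hx'
      exact (Finset.mem_compl.mp hiIc)
        (h (Finset.mem_filter.mpr ⟨Finset.mem_univ _, hx⟩))
  have hscal : (∑ I : Finset (Fin (n + 1)),
      if T ⊆ (Finset.image lab Iᶜ)ᶜ then ((-1 : ℤ) ^ I.card) else 0)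
      = if (Finset.univ.filter (fun i => lab i ∈ T)) = Finset.univ
          then ((-1 : ℤ) ^ (Finset.univ : Finset (Fin (n + 1))).card) else 0 := by
    rw [Finset.sum_congr rfl fun I _ => by rw [if_congr (hcond I) rfl rfl]]
    rw [← Finset.powerset_univ]
    exact aux_comb_a Finset.univ _ (Finset.subset_univ _)
  rw [hscal]
  by_cases hU : (Finset.univ.filter (fun i => lab i ∈ T)) = Finset.univ
  · rw [if_pos hU]
    have hLT : Finset.image lab Finset.univ ⊆ T := by
      intro x hx
      rw [Finset.mem_image] at hx
      obtain ⟨i, -, rfl⟩ := hx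
      have h6 : i ∈ Finset.univ.filter (fun i => lab i ∈ T) := by
        rw [hU]; exact Finset.mem_univ i
      exact (Finset.mem_filter.mp h6).2
    have hTcard : n + 1 ≤ T.card := by
      have h1 : (Finset.image lab Finset.univ).card = n + 1 := by
        rw [Finset.card_image_of_injective _ hinj, Finset.card_univ, Fintype.card_fin]
      rw [← h1]
      exact Finset.card_le_card hLT
    have hphi : phiGen hF n q T = 0 := by
      unfold phiGen
      erw [dif_neg (show ¬ T.card ≤ n by omega)]
    rw [hphi, smul_zero]
  · rw [if_neg hU, zero_smul]

/-- Inversion: `Σ_Q (-1)^{|Qᶜ|} s(q_Q) = [q]` in `Ab(D_{≤n})` for `|F q| ≤ n`. -/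
theorem sFormula_inv (q : C) (h : orderC C F (Quot.mk _ q) ≤ n) :
    (∑ Q : Finset (F.obj q),
        ((-1 : ℤ) ^ Qᶜ.card) • sFormula hF n (hF.subObj q (↑Q : Set (F.obj q))))
      = FreeAbelianGroup.of (⟨Quot.mk _ q, h⟩ : {c : ObjClass C // orderC C F c ≤ n}) := by
  classical
  have hstep : ∀ Q : Finset (F.obj q),
      ((-1 : ℤ) ^ Qᶜ.card) • sFormula hF n (hF.subObj q (↑Q : Set (F.obj q)))
        = ∑ T ∈ Q.powerset, ((-1 : ℤ) ^ Qᶜ.card) • phiGen hF n q T := by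
    intro Q
    rw [sFormula_subObj hF n q Q, Finset.smul_sum]
  rw [Finset.sum_congr rfl fun Q _ => hstep Q]
  rw [aux_sumex (fun Q : Finset (F.obj q) => Q)
    (fun Q _ => (-1 : ℤ) ^ Qᶜ.card) (phiGen hF n q)]
  have hscal : ∀ T : Finset (F.obj q),
      (∑ Q : Finset (F.obj q), if T ⊆ Q then ((-1 : ℤ) ^ Qᶜ.card) else 0)
        = if T = Finset.univ then 1 else 0 := by
    intro T
    have h1 : ∀ Q : Finset (F.obj q),
        (if T ⊆ Q then ((-1 : ℤ) ^ Qᶜ.card) else 0)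
          = ((-1 : ℤ) ^ Fintype.card (F.obj q)) *
              (if T ⊆ Q then ((-1 : ℤ) ^ Q.card) else 0) := by
      intro Q
      by_cases hTQ : T ⊆ Q
      · rw [if_pos hTQ, if_pos hTQ, Finset.card_compl,
          aux_neg_one_pow_sub (Finset.card_le_univ Q)]
      · rw [if_neg hTQ, if_neg hTQ, mul_zero]
    rw [Finset.sum_congr rfl fun Q _ => h1 Q, ← Finset.mul_sum]
    rw [show (∑ Q : Finset (F.obj q), if T ⊆ Q then ((-1 : ℤ) ^ Q.card) else 0)
        = ∑ Q ∈ (Finset.univ : Finset (F.obj q)).powerset,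
            (if T ⊆ Q then ((-1 : ℤ) ^ Q.card) else 0) from by rw [Finset.powerset_univ]]
    rw [aux_comb_a Finset.univ T (Finset.subset_univ T)]
    by_cases hT : T = Finset.univ
    · rw [if_pos hT, if_pos hT, Finset.card_univ, ← pow_add]
      exact Even.neg_one_pow ⟨_, rfl⟩
    · rw [if_neg hT, if_neg hT, mul_zero]
  rw [Finset.sum_congr rfl fun T _ => by rw [hscal T]]
  rw [aux_sum_if_univ_smul]
  unfold phiGen
  have hcard : (Finset.univ : Finset (F.obj q)).card ≤ n := by
    rw [Finset.card_univ]
    exact h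
  erw [dif_pos hcard]
  congr 1
  apply Subtype.ext
  show Quot.mk _ (hF.subObj q ((Finset.univ : Finset (F.obj q)) : Set (F.obj q))) = Quot.mk _ q
  rw [show ((Finset.univ : Finset (F.obj q)) : Set (F.obj q)) = Set.univ from Finset.coe_univ]
  exact Quot.sound (subObj_univ_iso hF q)

end MainAux

/-- Let `D = (C, F)` be a diagram category (with realization `B` of `D^□`)
and let `π : D^□₀ → S` be a surjection onto a set `S`.  Let `X` be the cubical complex with
`X₀ = S`, `Xₙ = D^□ₙ` for `n > 0`, whose action is that of `D^□` composed with `π` whenever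
the target cell dimension is `0` (morphisms into the `0`-cube only exist from the `0`-cube,
so this is the only modification).  Then for every `n ≥ 0`,
`Uₙ(X) ≅ Ab(D_{≤n}) / R`, where `R` is the subgroup generated by the elements `s(x) − s(y)`
for `0`-cells `x, y` of `D^□` (identified with isomorphism classes of objects) with
`π(x) = π(y)`, `s` being given on generators by `s(a) = ∑_{S ⊆ F(a), |S| ≤ n} a_S`. -/
theorem quotient_complex_presentation (C : Type) [SmallCategory C] (F : C ⥤ FintypeCat)
    (hF : IsDiagramCat C F) (B : BoxComplex C F)
    (S : Type) (π : DCell C F 0 → S) (hπ : Function.Surjective π)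
    (X : CubicalComplex)
    (e0 : X.obj (op (cubeObj 0)) ≃ S)
    (epos : ∀ k : ℕ, X.obj (op (cubeObj (k + 1))) ≃ B.X.obj (op (cubeObj (k + 1))))
    (hmap0 : ∀ (k : ℕ) (a : cubeObj 0 ⟶ cubeObj (k + 1)) (c : X.obj (op (cubeObj (k + 1)))),
      e0 (X.map a.op c) = π (B.cells 0 (B.X.map a.op (epos k c))))
    (hmappos : ∀ (j k : ℕ) (a : cubeObj (j + 1) ⟶ cubeObj (k + 1))
      (c : X.obj (op (cubeObj (k + 1)))),
      epos j (X.map a.op c) = B.X.map a.op (epos k c))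
    (n : ℕ) :
    Nonempty (UGroup X n ≃+
      (AbLe C F n ⧸ AddSubgroup.closure
        {z : AbLe C F n | ∃ a b : C, π (objCell C F a) = π (objCell C F b) ∧
          z = sFormula hF n a - sFormula hF n b})) := by
  classical
  set Rset : Set (AbLe C F n) :=
    {z : AbLe C F n | ∃ a b : C, π (objCell C F a) = π (objCell C F b) ∧
      z = sFormula hF n a - sFormula hF n b} with hRset
  set R : AddSubgroup (AbLe C F n) := AddSubgroup.closure Rset with hR
  -- choice of representatives
  have hrep : ∀ s : S, ∃ a : C, π (objCell C F a) = s := by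
    intro s
    obtain ⟨d, rfl⟩ := hπ s
    induction d using Quot.ind with
    | mk pc => exact ⟨pc.q, congrArg π (Quot.sound ⟨Iso.refl pc.q, fun i => i.elim0⟩)⟩
  choose rep hrepπ using hrep
  set mkQ : AbLe C F n →+ AbLe C F n ⧸ R := QuotientAddGroup.mk' R with hmkQ
  have hsame : ∀ {a b : C}, π (objCell C F a) = π (objCell C F b) →
      mkQ (sFormula hF n a) = mkQ (sFormula hF n b) := by
    intro a b h
    exact (QuotientAddGroup.eq_iff_sub_mem).mpr
      (AddSubgroup.subset_closure ⟨a, b, h, rfl⟩)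
  have hval : ∀ a : C, mkQ (sFormula hF n (rep (π (objCell C F a)))) = mkQ (sFormula hF n a) :=
    fun a => hsame (hrepπ _)
  -- the map Φ
  set ΦL : FreeAbelianGroup (X.obj (op (cubeObj 0))) →+ (AbLe C F n ⧸ R) :=
    FreeAbelianGroup.lift (fun x => mkQ (sFormula hF n (rep (e0 x)))) with hΦL
  have hΦrel : ∀ c : X.obj (op (cubeObj (n + 1))), ΦL (relationElt X n c) = 0 := by
    intro c
    obtain ⟨pc, hpc⟩ := Quot.exists_rep (B.cells (n + 1) (epos n c))
    have hcc : (B.cells (n + 1)).symm (Quot.mk _ pc) = epos n c := by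
      rw [hpc]
      exact Equiv.symm_apply_apply _ _
    set val : DCell C F 0 → (AbLe C F n ⧸ R) := fun d => mkQ (sFormula hF n (rep (π d)))
      with hvald
    have h1 : ΦL (relationElt X n c)
        = ∑ f : (cubeObj 0 ⟶ cubeObj (n + 1)),
            ((-1 : ℤ) ^ cubeWeight f) •
              val (B.cells 0 (B.X.map f.op ((B.cells (n + 1)).symm (Quot.mk _ pc)))) := by
      rw [relationElt, map_sum]
      refine Finset.sum_congr rfl fun f _ => ?_
      rw [map_zsmul]
      congr 1
      have hofx : ΦL (FreeAbelianGroup.of (X.map f.op c))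
          = mkQ (sFormula hF n (rep (e0 (X.map f.op c)))) := FreeAbelianGroup.lift_apply_of _ _
      rw [hofx, hmap0 n f c, ← hcc]
    rw [h1, corner_sum hF B n val pc]
    have h2 : ∀ I : Finset (Fin (n + 1)),
        ((-1 : ℤ) ^ I.card) •
            val (objCell C F (hF.subObj pc.q ((pc.lab '' ((↑I : Set (Fin (n + 1)))ᶜ))ᶜ)))
          = mkQ (((-1 : ℤ) ^ I.card) •
              sFormula hF n (hF.subObj pc.q ((pc.lab '' ((↑I : Set (Fin (n + 1)))ᶜ))ᶜ))) := by
      intro I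
      rw [map_zsmul]
      congr 1
      exact hval _
    rw [Finset.sum_congr rfl fun I _ => h2 I, ← map_sum,
      sFormula_rel hF n pc.q pc.lab pc.inj, map_zero]
  have hker1 : relSubgroup X n ≤ ΦL.ker := by
    rw [relSubgroup, AddSubgroup.closure_le]
    rintro z ⟨c, rfl⟩
    exact hΦrel c
  set Φq : UGroup X n →+ (AbLe C F n ⧸ R) :=
    QuotientAddGroup.lift (relSubgroup X n) ΦL hker1 with hΦq
  have hΦmk : ∀ z, Φq (mkUhom X n z) = ΦL z := fun z => rfl
  -- the map Ψ
  set ΨL : AbLe C F n →+ UGroup X n := FreeAbelianGroup.lift (psiGen hF π X e0 n) with hΨL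
  have hΨs : ∀ a : C, ΨL (sFormula hF n a) = gval π X e0 n a :=
    fun a => psiL_sFormula hF B π X e0 epos n hmap0 a
  have hker2 : R ≤ ΨL.ker := by
    rw [hR, AddSubgroup.closure_le]
    rintro z ⟨a, b, hab, rfl⟩
    have : ΨL (sFormula hF n a - sFormula hF n b) = 0 := by
      rw [map_sub, hΨs, hΨs]
      unfold gval
      rw [hab, sub_self]
    exact this
  set Ψq : (AbLe C F n ⧸ R) →+ UGroup X n := QuotientAddGroup.lift R ΨL hker2 with hΨq
  have hΨmk : ∀ z, Ψq (mkQ z) = ΨL z := fun z => rfl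
  -- Φ on gval
  have hΦgval : ∀ a : C, Φq (gval π X e0 n a) = mkQ (sFormula hF n a) := by
    intro a
    have h1 : gval π X e0 n a = mkUhom X n (FreeAbelianGroup.of (e0.symm (π (objCell C F a)))) :=
      rfl
    have h2 : ΦL (FreeAbelianGroup.of (e0.symm (π (objCell C F a))))
        = mkQ (sFormula hF n (rep (e0 (e0.symm (π (objCell C F a)))))) :=
      FreeAbelianGroup.lift_apply_of _ _
    rw [h1, hΦmk, h2, Equiv.apply_symm_apply]
    exact hval a
  -- compositions
  have hhom1 : (Ψq.comp Φq).comp (mkUhom X n) = mkUhom X n := by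
    apply FreeAbelianGroup.lift_ext
    intro x
    show Ψq (Φq (mkUhom X n (FreeAbelianGroup.of x))) = mkUhom X n (FreeAbelianGroup.of x)
    have h1 : ΦL (FreeAbelianGroup.of x) = mkQ (sFormula hF n (rep (e0 x))) :=
      FreeAbelianGroup.lift_apply_of _ _
    rw [hΦmk, h1, hΨmk, hΨs]
    unfold gval
    rw [hrepπ (e0 x), Equiv.symm_apply_apply]
    rfl
  have hhom2 : (Φq.comp Ψq).comp mkQ = mkQ := by
    apply FreeAbelianGroup.lift_ext
    intro g
    obtain ⟨cls, hcl⟩ := g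
    revert hcl
    induction cls using Quot.ind with
    | mk q =>
      intro hcl
      show Φq (Ψq (mkQ (FreeAbelianGroup.of ⟨Quot.mk _ q, hcl⟩)))
        = mkQ (FreeAbelianGroup.of ⟨Quot.mk _ q, hcl⟩)
      have hof : ΨL (FreeAbelianGroup.of (⟨Quot.mk _ q, hcl⟩ :
          {c : ObjClass C // orderC C F c ≤ n})) = tval hF π X e0 n q :=
        FreeAbelianGroup.lift_apply_of _ _
      erw [hΨmk, hof]
      unfold tval
      rw [map_sum]
      have h3 : ∀ Q : Finset (F.obj q),
          Φq (((-1 : ℤ) ^ Qᶜ.card) • gval π X e0 n (hF.subObj q (↑Q : Set (F.obj q))))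
            = mkQ (((-1 : ℤ) ^ Qᶜ.card) • sFormula hF n (hF.subObj q (↑Q : Set (F.obj q)))) := by
        intro Q
        rw [map_zsmul, map_zsmul, hΦgval]
      rw [Finset.sum_congr rfl fun Q _ => h3 Q, ← map_sum, sFormula_inv hF n q hcl]
  have hleft : Function.LeftInverse Ψq Φq := fun u =>
    QuotientAddGroup.induction_on u (fun z => DFunLike.congr_fun hhom1 z)
  have hright : Function.RightInverse Ψq Φq := fun y =>
    QuotientAddGroup.induction_on y (fun z => DFunLike.congr_fun hhom2 z)
  exact ⟨AddEquiv.mk' (Equiv.mk Φq Ψq hleft hright) (fun x y => Φq.map_add x y)⟩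
end

section
/- Let M be a monoid generated by a subset S ⊆ M, let ℤ[M] be the monoid ring of M over ℤ, and let J be the two-sided ideal of ℤ[M] generated by the elements 1 − y for y ∈ S. Then for every n ≥ 0, the quotient ring ℤ[M]/J^{n+1} is generated as an abelian group by the images of the elements of M expressible as products y_1 y_2 ⋯ y_k of at most n elements of S (the empty product being the identity of M). -/
open CategoryTheory Opposite

/-- The `(n)`-th power of a two-sided ideal: `I⁰ = ⊤` and `I^{k+1}` is the two-sided ideal
spanned by products of an element of `I` with an element of `I^k`. -/
def tsiPow {R : Type} [Ring R] (I : TwoSidedIdeal R) : ℕ → TwoSidedIdeal R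
  | 0 => ⊤
  | k + 1 => TwoSidedIdeal.span {x : R | ∃ a ∈ I, ∃ b ∈ tsiPow I k, x = a * b}

/-- The two-sided ideal `J ⊆ ℤ[M]` generated by the elements `1 - y` for `y ∈ S`. -/
noncomputable def Jideal (M : Type) [Monoid M] (S : Set M) : TwoSidedIdeal (MonoidAlgebra ℤ M) :=
  TwoSidedIdeal.span {x : MonoidAlgebra ℤ M | ∃ y ∈ S, x = 1 - MonoidAlgebra.of ℤ M y}

/-- The quotient ring `ℤ[M]/J^{n+1}`. -/
def JQuot (M : Type) [Monoid M] (S : Set M) (n : ℕ) : Type :=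
  ((tsiPow (Jideal M S) (n + 1)).ringCon).Quotient

noncomputable instance (M : Type) [Monoid M] (S : Set M) (n : ℕ) : Ring (JQuot M S n) := by
  unfold JQuot; infer_instance

/-- The quotient map `ℤ[M] → ℤ[M]/J^{n+1}`. -/
noncomputable def JQuotMk (M : Type) [Monoid M] (S : Set M) (n : ℕ) :
    MonoidAlgebra ℤ M →+* JQuot M S n :=
  RingCon.mk' _

section Aux

variable {M : Type} [Monoid M] (S : Set M)

/-- The ordered product of the `1 - y` over a list. -/
noncomputable def fprod (l : List M) : MonoidAlgebra ℤ M :=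
  (l.map (fun y => 1 - MonoidAlgebra.of ℤ M y)).prod

lemma fprod_nil : fprod (M := M) [] = 1 := rfl

lemma fprod_cons (y : M) (t : List M) :
    fprod (y :: t) = (1 - MonoidAlgebra.of ℤ M y) * fprod t := by
  simp [fprod]

lemma tsiPow_succ_le {R : Type} [Ring R] (I : TwoSidedIdeal R) (k : ℕ) :
    tsiPow I (k + 1) ≤ tsiPow I k := by
  intro x hx
  have hx' : x ∈ TwoSidedIdeal.span
      {x : R | ∃ a ∈ I, ∃ b ∈ tsiPow I k, x = a * b} := hx
  rw [TwoSidedIdeal.mem_span_iff] at hx'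
  exact hx' _ (by rintro z ⟨a, ha, b, hb, rfl⟩; exact (tsiPow I k).mul_mem_left a b hb)

lemma tsiPow_le_of_le {R : Type} [Ring R] (I : TwoSidedIdeal R) {j k : ℕ} (h : j ≤ k) :
    tsiPow I k ≤ tsiPow I j := by
  induction h with
  | refl => exact le_rfl
  | step _ ih => exact le_trans (tsiPow_succ_le I _) (by assumption)

lemma fprod_mem (l : List M) (hl : ∀ y ∈ l, y ∈ S) :
    fprod l ∈ tsiPow (Jideal M S) l.length := by
  induction l with
  | nil => rw [fprod_nil]; trivial
  | cons y t ih =>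
      rw [fprod_cons]
      refine TwoSidedIdeal.subset_span ?_
      exact ⟨1 - MonoidAlgebra.of ℤ M y,
        TwoSidedIdeal.subset_span ⟨y, hl y (List.mem_cons_self), rfl⟩,
        fprod t, ih (fun z hz => hl z (List.mem_cons_of_mem _ hz)), rfl⟩

/-- Inclusion–exclusion: `of l.prod = Σ_{u ⊆ l} (-1)^{|u|} fprod u`. -/
lemma of_prod_eq_sum (l : List M) :
    MonoidAlgebra.of ℤ M l.prod =
      (l.sublists'.map (fun u => ((-1 : ℤ) ^ u.length) • fprod u)).sum := by
  induction l with
  | nil => simp [fprod_nil]; exact (MonoidAlgebra.one_def).symm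
  | cons y t ih =>
      rw [List.sublists'_cons, List.map_append, List.sum_append, List.map_map]
      have h2 : ((t.sublists').map
            ((fun u => ((-1 : ℤ) ^ u.length) • fprod u) ∘ (y :: ·))).sum
          = (-(1 - MonoidAlgebra.of ℤ M y)) *
            ((t.sublists').map (fun u => ((-1 : ℤ) ^ u.length) • fprod u)).sum := by
        rw [← List.sum_map_mul_left]
        refine congrArg List.sum (List.map_congr_left fun u _ => ?_)
        simp only [Function.comp_apply, List.length_cons, fprod_cons, pow_succ,
          mul_neg_one, mul_smul_comm, neg_smul, neg_mul, neg_neg, neg_smul]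
        exact (smul_neg _ _).symm
      rw [h2, ← ih, List.prod_cons, map_mul]
      noncomm_ring


/-- Inclusion–exclusion the other way: `fprod l = Σ_{u ⊆ l} (-1)^{|u|} of u.prod`. -/
lemma fprod_eq_sum (l : List M) :
    fprod l =
      (l.sublists'.map (fun u => ((-1 : ℤ) ^ u.length) • MonoidAlgebra.of ℤ M u.prod)).sum := by
  induction l with
  | nil => simp [fprod_nil]; exact MonoidAlgebra.one_def
  | cons y t ih =>
      rw [List.sublists'_cons, List.map_append, List.sum_append, List.map_map]
      have h2 : ((t.sublists').map
            ((fun u => ((-1 : ℤ) ^ u.length) • MonoidAlgebra.of ℤ M u.prod) ∘ (y :: ·))).sum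
          = (-(MonoidAlgebra.of ℤ M y)) *
            ((t.sublists').map
              (fun u => ((-1 : ℤ) ^ u.length) • MonoidAlgebra.of ℤ M u.prod)).sum := by
        rw [← List.sum_map_mul_left]
        refine congrArg List.sum (List.map_congr_left fun u _ => ?_)
        simp only [Function.comp_apply, List.length_cons, List.prod_cons, map_mul, pow_succ,
          mul_neg_one, mul_smul_comm, neg_smul, neg_mul, neg_neg, neg_smul]
        exact (smul_neg _ _).symm
      rw [h2, ← ih, fprod_cons]
      noncomm_ring

end Aux

/-- Let `M` be a monoid generated by `S ⊆ M`, and `J ⊆ ℤ[M]` the two-sided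
ideal generated by `{1 − y : y ∈ S}`.  Then for every `n ≥ 0`, the quotient `ℤ[M]/J^{n+1}` is
generated as an abelian group by the images of the elements of `M` expressible as products of
at most `n` elements of `S` (the empty product being `1`). -/
theorem JQuot_generated_by_short_words (M : Type) [Monoid M] (S : Set M)
    (hgen : Submonoid.closure S = ⊤) (n : ℕ) :
    AddSubgroup.closure
      {x : JQuot M S n | ∃ l : List M, l.length ≤ n ∧ (∀ y ∈ l, y ∈ S) ∧
        x = JQuotMk M S n (MonoidAlgebra.of ℤ M l.prod)} = ⊤ := by
  set φ := JQuotMk M S n with hφ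
  set T := AddSubgroup.closure
      {x : JQuot M S n | ∃ l : List M, l.length ≤ n ∧ (∀ y ∈ l, y ∈ S) ∧
        x = φ (MonoidAlgebra.of ℤ M l.prod)} with hT
  -- the quotient map kills `J^{n+1}`
  have hkill : ∀ x : MonoidAlgebra ℤ M, x ∈ tsiPow (Jideal M S) (n + 1) → φ x = 0 := by
    intro x hx
    have : φ x = φ 0 := by
      show RingCon.mk' _ x = RingCon.mk' _ (0 : MonoidAlgebra ℤ M)
      exact (RingCon.eq _).mpr (((tsiPow (Jideal M S) (n + 1)).rel_iff _ _).mpr (by simpa using hx))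
    simpa using this
  -- images of `fprod u` for short `u` lie in `T`
  have hfT : ∀ u : List M, (∀ y ∈ u, y ∈ S) → u.length ≤ n → φ (fprod u) ∈ T := by
    intro u hu hlen
    rw [fprod_eq_sum, map_list_sum, List.map_map]
    refine list_sum_mem ?_
    intro x hx
    obtain ⟨v, hv, rfl⟩ := List.mem_map.mp hx
    rw [List.mem_sublists'] at hv
    simp only [Function.comp_apply]
    rw [map_zsmul]
    refine zsmul_mem ?_ _
    exact AddSubgroup.subset_closure
      ⟨v, le_trans hv.length_le hlen, fun y hy => hu y (hv.subset hy), rfl⟩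
  -- images of all `of m` lie in `T`
  have hofT : ∀ m : M, φ (MonoidAlgebra.of ℤ M m) ∈ T := by
    intro m
    have hm : m ∈ Submonoid.closure S := hgen ▸ Submonoid.mem_top m
    obtain ⟨l, hlS, rfl⟩ := Submonoid.exists_list_of_mem_closure hm
    rw [of_prod_eq_sum, map_list_sum, List.map_map]
    refine list_sum_mem ?_
    intro x hx
    obtain ⟨u, hu, rfl⟩ := List.mem_map.mp hx
    rw [List.mem_sublists'] at hu
    simp only [Function.comp_apply]
    rw [map_zsmul]
    refine zsmul_mem ?_ _
    by_cases h : u.length ≤ n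
    · exact hfT u (fun y hy => hlS y (hu.subset hy)) h
    · have : fprod u ∈ tsiPow (Jideal M S) (n + 1) :=
        tsiPow_le_of_le (Jideal M S) (by omega) (fprod_mem S u (fun y hy => hlS y (hu.subset hy)))
      rw [hkill _ this]
      exact zero_mem T
  rw [eq_top_iff]
  rintro x -
  obtain ⟨r, rfl⟩ : ∃ r, φ r = x := Quot.inductionOn x fun r => ⟨r, rfl⟩
  refine MonoidAlgebra.induction_on (motive := fun a => φ a ∈ T) r hofT (fun f g hf hg => by
      show φ (f + g) ∈ T; rw [map_add]; exact add_mem hf hg)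
    (fun z f hf => by show φ (z • f) ∈ T; rw [map_zsmul]; exact zsmul_mem hf z)
end

section
/- For all nonnegative integers a_1, a_2, b, the function f satisfies f(a_1 + a_2, b + 1) = f(a_1 + a_2 + 1, b + 1) + Σ_{b_1 + b_2 = b} f(a_1, b_1) · f(a_2, b_2), where the sum ranges over all pairs of nonnegative integers (b_1, b_2) with b_1 + b_2 = b. -/
/-- The recursively defined function `f : ℕ × ℕ → ℤ` with `f(0,b) = C_b` (the `b`-th Catalan
number), `f(a,0) = 1`, `f(1,b) = 0` for `b > 0`, and
`f(a,b) = f(a-1,b) - f(a-2,b-1)` for `a > 1`, `b > 0`. -/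
def catf : ℕ → ℕ → ℤ
  | 0, b => (catalan b : ℤ)
  | _ + 1, 0 => 1
  | 1, _ + 1 => 0
  | a + 2, b + 1 => catf (a + 1) (b + 1) - catf a b

/-- The convolution sum `S a₁ a₂ b = ∑_{b₁+b₂=b} catf a₁ b₁ * catf a₂ b₂`. -/
noncomputable def S (a₁ a₂ b : ℕ) : ℤ :=
  ∑ p ∈ Finset.HasAntidiagonal.antidiagonal b, catf a₁ p.1 * catf a₂ p.2

lemma catf_zero (n : ℕ) : catf n 0 = 1 := by
  cases n <;> simp [catf]

lemma catf_one (b : ℕ) : catf 1 (b + 1) = 0 := rfl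

lemma catf_step (a b : ℕ) : catf (a + 2) (b + 1) = catf (a + 1) (b + 1) - catf a b := rfl

lemma S_zero (a₁ a₂ : ℕ) : S a₁ a₂ 0 = 1 := by
  simp [S, catf_zero]

lemma S00 (b : ℕ) : S 0 0 b = (catalan (b + 1) : ℤ) := by
  simp [S, catf, catalan_succ']

lemma sum_rec (a₁ a₂ b : ℕ) :
    S (a₁ + 2) a₂ (b + 1) = S (a₁ + 1) a₂ (b + 1) - S a₁ a₂ b := by
  simp only [S, Finset.Nat.antidiagonal_succ, Finset.sum_cons, Finset.sum_map,
    Function.Embedding.prodMap, Function.Embedding.coeFn_mk, Function.Embedding.refl_apply,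
    Prod.map_fst, Prod.map_snd, Nat.succ_eq_add_one, catf_zero, catf_step, sub_mul,
    Finset.sum_sub_distrib]
  ring

lemma sum_rec' (a₁ a₂ b : ℕ) :
    S a₁ (a₂ + 2) (b + 1) = S a₁ (a₂ + 1) (b + 1) - S a₁ a₂ b := by
  simp only [S, Finset.Nat.antidiagonal_succ', Finset.sum_cons, Finset.sum_map,
    Function.Embedding.prodMap, Function.Embedding.coeFn_mk, Function.Embedding.refl_apply,
    Prod.map_fst, Prod.map_snd, Nat.succ_eq_add_one, catf_zero, catf_step, mul_sub,
    Finset.sum_sub_distrib]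
  ring

lemma key1 (a₂ b : ℕ) : S 1 a₂ b = catf a₂ b := by
  cases b with
  | zero => simp [S_zero, catf_zero]
  | succ b =>
    simp [S, Finset.Nat.antidiagonal_succ, Finset.sum_map, catf_zero, catf_one]

lemma key1' (a₁ b : ℕ) : S a₁ 1 b = catf a₁ b := by
  cases b with
  | zero => simp [S_zero, catf_zero]
  | succ b =>
    simp [S, Finset.Nat.antidiagonal_succ', Finset.sum_map, catf_zero, catf_one]

lemma key0 (a b : ℕ) : S 0 (a + 1) b = catf a b := by
  induction a using Nat.twoStepInduction generalizing b with
  | zero => simpa using key1' 0 b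
  | one =>
    cases b with
    | zero => simp [S_zero, catf_zero]
    | succ b => rw [sum_rec', key1' 0 (b + 1), S00]; simp [catf]
  | more a ih1 ih2 =>
    cases b with
    | zero => simp [S_zero, catf_zero]
    | succ b => rw [sum_rec', ih2 (b + 1), ih1 b, catf_step]

/-- `S 0 a b = catf a (b+1) - catf (a+1) (b+1)`. -/
lemma Sdiff (a b : ℕ) : S 0 a b = catf a (b + 1) - catf (a + 1) (b + 1) := by
  cases a with
  | zero => rw [S00]; simp [catf, catf_one]
  | succ a => rw [key0, catf_step]; ring

lemma key (a₁ a₂ b : ℕ) : S (a₁ + 1) a₂ b = catf (a₁ + a₂) b := by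
  induction a₁ using Nat.twoStepInduction generalizing b with
  | zero => simpa using key1 a₂ b
  | one =>
    cases b with
    | zero => simp [S_zero, catf_zero]
    | succ b =>
      rw [sum_rec, key1 a₂ (b + 1), Sdiff a₂ b]
      have : 1 + a₂ = a₂ + 1 := by omega
      rw [this]; ring
  | more a ih1 ih2 =>
    cases b with
    | zero => simp [S_zero, catf_zero]
    | succ b =>
      rw [sum_rec, ih2 (b + 1), ih1 b]
      have h1 : a + 2 + a₂ = (a + a₂) + 2 := by omega
      have h2 : a + 1 + a₂ = (a + a₂) + 1 := by omega
      rw [h1, h2, catf_step]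

/-- For all nonnegative integers `a₁, a₂, b`,
`f(a₁+a₂, b+1) = f(a₁+a₂+1, b+1) + ∑_{b₁+b₂=b} f(a₁,b₁)·f(a₂,b₂)`. -/
theorem catf_rec_identity (a₁ a₂ b : ℕ) :
    catf (a₁ + a₂) (b + 1) =
      catf (a₁ + a₂ + 1) (b + 1) +
        ∑ p ∈ Finset.HasAntidiagonal.antidiagonal b, catf a₁ p.1 * catf a₂ p.2 := by
  have hS : ∑ p ∈ Finset.HasAntidiagonal.antidiagonal b, catf a₁ p.1 * catf a₂ p.2 = S a₁ a₂ b := rfl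
  rw [hS]
  cases a₁ with
  | zero => rw [Sdiff]; simp
  | succ a =>
    rw [key a a₂ b]
    have h1 : a + 1 + a₂ = (a + a₂) + 1 := by omega
    rw [h1, show a + a₂ + 1 + 1 = a + a₂ + 2 from rfl, catf_step]; ring
end

section
/- For all nonnegative integers a_1, a_2, b, the function f satisfies Σ_{b_1 + b_2 = b} f(a_1, b_1) · f(a_2 + 1, b_2) = Σ_{b_1 + b_2 = b} f(a_1 + 1, b_1) · f(a_2, b_2), where the sums range over all pairs of nonnegative integers (b_1, b_2) with b_1 + b_2 = b. -/
open PowerSeries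

noncomputable def F (a : ℕ) : PowerSeries ℤ := PowerSeries.mk (catf a)

lemma F_one : F 1 = 1 := by
  ext b
  cases b <;> simp [F, catf, coeff_one]

lemma F_rec (a : ℕ) : F (a + 2) = F (a + 1) - X * F a := by
  ext b
  cases b with
  | zero => simp [F, catf]
  | succ b => simp [F, catf, coeff_succ_X_mul]

lemma F0_F2 : F 0 * F 2 = 1 := by
  have h2 : F 2 = 1 - X * F 0 := by rw [F_rec 0, F_one]
  have h : F 0 = 1 + X * (F 0 * F 0) := by
    ext b
    cases b with
    | zero => simp [F, catf, coeff_one]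
    | succ b =>
      rw [show ((coeff (b+1)) (1 + X * (F 0 * F 0))) =
        coeff b (F 0 * F 0) by rw [map_add, coeff_succ_X_mul, coeff_one]; simp]
      simp only [F, coeff_mk, catf, coeff_mul, catalan_succ']
      push_cast
      rfl
  rw [h2]
  linear_combination h

lemma F_mul_swap (a₁ : ℕ) : ∀ a₂, F a₁ * F (a₂ + 1) = F (a₁ + 1) * F a₂ := by
  induction a₁ using Nat.twoStepInduction with
  | zero =>
    intro a₂
    show F 0 * F (a₂ + 1) = F 1 * F a₂
    rw [F_one, one_mul]
    induction a₂ using Nat.twoStepInduction with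
    | zero => rw [F_one, mul_one]
    | one => show F 0 * F 2 = F 1; rw [F0_F2, F_one]
    | more n ih1 ih2 =>
      show F 0 * F (n + 1 + 2) = F (n + 2)
      have ih2' : F 0 * F (n + 2) = F (n + 1) := ih2
      have h3 : F (n + 3) = F (n + 2) - X * F (n + 1) := F_rec (n + 1)
      show F 0 * F (n + 3) = F (n + 2)
      have h2'' : F (n + 2) = F (n + 1) - X * F n := F_rec n
      linear_combination F 0 * h3 - h2'' + ih2' - X * ih1
  | one =>
    intro a₂
    show F 1 * F (a₂ + 1) = F 2 * F a₂
    rw [F_one, one_mul]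
    induction a₂ using Nat.twoStepInduction with
    | zero => show F 1 = F 2 * F 0; rw [mul_comm, F0_F2, F_one]
    | one => show F 2 = F 2 * F 1; rw [F_one, mul_one]
    | more n ih1 ih2 =>
      show F (n + 3) = F 2 * F (n + 2)
      have ih2' : F (n + 2) = F 2 * F (n + 1) := ih2
      have h3 : F (n + 3) = F (n + 2) - X * F (n + 1) := F_rec (n + 1)
      have h2'' : F (n + 2) = F (n + 1) - X * F n := F_rec n
      linear_combination h3 + ih2' - F 2 * h2'' - X * ih1
  | more n ih1 ih2 =>
    intro a₂
    show F (n + 2) * F (a₂ + 1) = F (n + 3) * F a₂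
    have ih2' : ∀ a, F (n + 1) * F (a + 1) = F (n + 2) * F a := ih2
    have h3 : F (n + 3) = F (n + 2) - X * F (n + 1) := F_rec (n + 1)
    have h2'' : F (n + 2) = F (n + 1) - X * F n := F_rec n
    linear_combination F (a₂ + 1) * h2'' + ih2' a₂ - X * ih1 a₂ - F a₂ * h3

/-- For all nonnegative integers `a₁, a₂, b`,
`∑_{b₁+b₂=b} f(a₁,b₁)·f(a₂+1,b₂) = ∑_{b₁+b₂=b} f(a₁+1,b₁)·f(a₂,b₂)`. -/
theorem catf_convolution_symm (a₁ a₂ b : ℕ) :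
    ∑ p ∈ Finset.HasAntidiagonal.antidiagonal b, catf a₁ p.1 * catf (a₂ + 1) p.2 =
      ∑ p ∈ Finset.HasAntidiagonal.antidiagonal b, catf (a₁ + 1) p.1 * catf a₂ p.2 := by
  have := congrArg (coeff b) (F_mul_swap a₁ a₂)
  simpa [coeff_mul, F] using this
end
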